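/- arXiv:2303.11440 — 9 statements merged into one kernel-verified Lean document; each statement's English description precedes it below -/
import Mathlib

section
/- Let ω : ℝ → ℝ be continuous, let Ω(p) = ∫₀^p ω(r) dr, let σ₀ = √(2·max(0, sup_{p∈[0,1]} Ω(p))), and define d(s) = ∫₀¹ (s² − 2Ω(τ))^{−1/2} dτ for s ∈ (σ₀, ∞). Then d is continuous and strictly decreasing on (σ₀, ∞), and d(s) → 0 as s → ∞. -/
open MeasureTheory Set

/-- The depth `d(s) = ∫₀¹ (s² − 2Ω(τ))^{−1/2} dτ` of the uniform stream is
continuous and strictly decreasing on `(σ₀, ∞)`, where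
`σ₀ = √(2·max(0, sup_{[0,1]} Ω))`, and `d(s) → 0` as `s → ∞`. -/
theorem stmt_3 (ω : ℝ → ℝ) (hω : Continuous ω)
    (Ω : ℝ → ℝ) (hΩ : ∀ p, Ω p = ∫ r in (0:ℝ)..p, ω r)
    (σ₀ : ℝ) (hσ₀ : σ₀ = Real.sqrt (2 * max 0 (sSup (Ω '' Set.Icc 0 1))))
    (d : ℝ → ℝ)
    (hd : ∀ s, d s = ∫ τ in (0:ℝ)..1, (Real.sqrt (s ^ 2 - 2 * Ω τ))⁻¹) :
    ContinuousOn d (Set.Ioi σ₀) ∧ StrictAntiOn d (Set.Ioi σ₀) ∧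
      Filter.Tendsto d Filter.atTop (nhds 0) := by
  have hΩc : Continuous Ω := by
    have h := intervalIntegral.continuous_primitive (μ := volume)
      (fun a b => hω.intervalIntegrable a b) 0
    exact h.congr (fun p => (hΩ p).symm)
  set M := sSup (Ω '' Set.Icc 0 1) with hM
  have hbdd : BddAbove (Ω '' Set.Icc 0 1) := (isCompact_Icc.image hΩc).bddAbove
  have hΩ0 : Ω 0 = 0 := by rw [hΩ 0, intervalIntegral.integral_same]
  have hM0 : 0 ≤ M := by
    have : Ω 0 ≤ M := le_csSup hbdd ⟨0, ⟨le_refl _, zero_le_one⟩, rfl⟩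
    linarith [hΩ0 ▸ this]
  have hMle : ∀ τ ∈ Set.Icc (0:ℝ) 1, Ω τ ≤ M := fun τ hτ => le_csSup hbdd ⟨τ, hτ, rfl⟩
  have hσ₀nn : 0 ≤ σ₀ := hσ₀ ▸ Real.sqrt_nonneg _
  have hσ₀sq : σ₀ ^ 2 = 2 * M := by
    rw [hσ₀, max_eq_right hM0, sq, Real.mul_self_sqrt (by linarith)]
  -- positivity of s² − 2Ωτ for s > σ₀
  have key : ∀ s, σ₀ < s → ∀ τ ∈ Set.Icc (0:ℝ) 1, 0 < s ^ 2 - 2 * Ω τ := by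
    intro s hs τ hτ
    have h1 : σ₀ ^ 2 < s ^ 2 := by
      apply pow_lt_pow_left₀ hs hσ₀nn; norm_num
    have := hMle τ hτ
    nlinarith
  -- continuity of the integrand in τ for fixed s
  have hcont : ∀ s, σ₀ < s →
      ContinuousOn (fun τ => (Real.sqrt (s ^ 2 - 2 * Ω τ))⁻¹) (Set.Icc (0:ℝ) 1) := by
    intro s hs
    apply ContinuousOn.inv₀
    · exact (Real.continuous_sqrt.comp
        (continuous_const.sub (continuous_const.mul hΩc))).continuousOn
    · intro τ hτ
      exact ne_of_gt (Real.sqrt_pos.mpr (key s hs τ hτ))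
  have hInt : ∀ s, σ₀ < s →
      IntervalIntegrable (fun τ => (Real.sqrt (s ^ 2 - 2 * Ω τ))⁻¹) volume 0 1 := by
    intro s hs
    apply ContinuousOn.intervalIntegrable
    rw [Set.uIcc_of_le (zero_le_one)]
    exact hcont s hs
  refine ⟨?_, ?_, ?_⟩
  · -- Continuity
    intro s₀ hs₀
    rw [Set.mem_Ioi] at hs₀
    set a := (σ₀ + s₀) / 2 with ha
    have haσ : σ₀ < a := by rw [ha]; linarith
    have has : a < s₀ := by rw [ha]; linarith
    have hann : 0 ≤ a := le_of_lt (lt_of_le_of_lt hσ₀nn haσ)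
    set c := a ^ 2 - 2 * M with hc
    have hcpos : 0 < c := by
      have : σ₀ ^ 2 < a ^ 2 := by apply pow_lt_pow_left₀ haσ hσ₀nn; norm_num
      rw [hc]; nlinarith
    set F : ℝ → ℝ → ℝ := fun s τ => (Real.sqrt (max c (s ^ 2 - 2 * Ω τ)))⁻¹ with hF
    have hFc : Continuous (Function.uncurry F) := by
      apply Continuous.inv₀
      · exact Real.continuous_sqrt.comp (continuous_const.max
          (((continuous_fst.pow 2)).sub (continuous_const.mul (hΩc.comp continuous_snd))))
      · intro p
        exact ne_of_gt (Real.sqrt_pos.mpr (lt_of_lt_of_le hcpos (le_max_left _ _)))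
    have hGc : Continuous (fun s => ∫ τ in (0:ℝ)..1, F s τ) :=
      intervalIntegral.continuous_parametric_intervalIntegral_of_continuous' hFc 0 1
    have heq : ∀ s, a < s → d s = ∫ τ in (0:ℝ)..1, F s τ := by
      intro s hs
      rw [hd s]
      apply intervalIntegral.integral_congr
      intro τ hτ
      rw [Set.uIcc_of_le (zero_le_one)] at hτ
      have h1 : c ≤ s ^ 2 - 2 * Ω τ := by
        have h2 : a ^ 2 ≤ s ^ 2 := by
          apply pow_le_pow_left₀ hann (le_of_lt hs)
        have := hMle τ hτ
        rw [hc]; nlinarith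
      simp only [hF, max_eq_right h1]
    have hev : d =ᶠ[nhds s₀] (fun s => ∫ τ in (0:ℝ)..1, F s τ) := by
      filter_upwards [Ioi_mem_nhds has] with s hs
      exact heq s hs
    exact (hGc.continuousAt.congr hev.symm).continuousWithinAt
  · -- Strict antitonicity
    intro s hs t ht hst
    rw [Set.mem_Ioi] at hs ht
    rw [hd s, hd t, ← sub_pos, ← intervalIntegral.integral_sub (hInt s hs) (hInt t ht)]
    apply intervalIntegral.intervalIntegral_pos_of_pos_on
    · exact (hInt s hs).sub (hInt t ht)
    · intro τ hτ
      have hτ' : τ ∈ Set.Icc (0:ℝ) 1 := ⟨le_of_lt hτ.1, le_of_lt hτ.2⟩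
      have hps := key s hs τ hτ'
      have hsqrt : Real.sqrt (s ^ 2 - 2 * Ω τ) < Real.sqrt (t ^ 2 - 2 * Ω τ) := by
        apply Real.sqrt_lt_sqrt (le_of_lt hps)
        have : s ^ 2 < t ^ 2 := by
          apply pow_lt_pow_left₀ hst (le_trans hσ₀nn (le_of_lt hs)); norm_num
        linarith
      have h1 : 0 < Real.sqrt (s ^ 2 - 2 * Ω τ) := Real.sqrt_pos.mpr hps
      have := inv_strictAnti₀ h1 hsqrt
      linarith
    · norm_num
  · -- Tendsto 0 at infinity
    have hub : ∀ s, σ₀ < s → d s ≤ (Real.sqrt (s ^ 2 - 2 * M))⁻¹ := by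
      intro s hs
      have hsM : 0 < s ^ 2 - 2 * M := by
        have : σ₀ ^ 2 < s ^ 2 := by apply pow_lt_pow_left₀ hs hσ₀nn; norm_num
        nlinarith
      rw [hd s]
      calc ∫ τ in (0:ℝ)..1, (Real.sqrt (s ^ 2 - 2 * Ω τ))⁻¹
          ≤ ∫ _ in (0:ℝ)..1, (Real.sqrt (s ^ 2 - 2 * M))⁻¹ := by
            apply intervalIntegral.integral_mono_on zero_le_one (hInt s hs)
              intervalIntegrable_const
            intro τ hτ
            apply inv_anti₀ (Real.sqrt_pos.mpr hsM)
            apply Real.sqrt_le_sqrt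
            have := hMle τ hτ
            linarith
        _ = (Real.sqrt (s ^ 2 - 2 * M))⁻¹ := by simp
    have hlb : ∀ s, σ₀ < s → 0 ≤ d s := by
      intro s hs
      rw [hd s]
      apply intervalIntegral.integral_nonneg zero_le_one
      intro τ _
      positivity
    have hsqrtTop : Filter.Tendsto Real.sqrt Filter.atTop Filter.atTop := by
      have h := tendsto_rpow_atTop (y := (1/2 : ℝ)) (by norm_num)
      exact h.congr' (by
        filter_upwards [Filter.eventually_ge_atTop (0:ℝ)] with x _
        exact (Real.sqrt_eq_rpow x).symm)
    have hargTop : Filter.Tendsto (fun s : ℝ => s ^ 2 - 2 * M) Filter.atTop Filter.atTop := by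
      apply Filter.tendsto_atTop_add_const_right
      exact Filter.tendsto_pow_atTop (by norm_num)
    have hbound : Filter.Tendsto (fun s => (Real.sqrt (s ^ 2 - 2 * M))⁻¹)
        Filter.atTop (nhds 0) :=
      tendsto_inv_atTop_zero.comp (hsqrtTop.comp hargTop)
    apply squeeze_zero' ?_ ?_ hbound
    · filter_upwards [Filter.eventually_gt_atTop σ₀] with s hs
      exact hlb s hs
    · filter_upwards [Filter.eventually_gt_atTop σ₀] with s hs
      exact hub s hs
end

section
/- Let ω : ℝ → ℝ be continuous, let Ω(p) = ∫₀^p ω(r) dr, let σ₀ = √(2·max(0, sup_{p∈[0,1]} Ω(p))), and define on the interval I = (σ₀, ∞) the functions d(s) = ∫₀¹ (s² − 2Ω(τ))^{−1/2} dτ and 𝓡(s) = (1/2)s² + d(s) − Ω(1). Then 𝓡 is continuous on I, 𝓡(s) → ∞ as s → ∞, and for every R > R_c := inf_{s∈I} 𝓡(s) there exists s ∈ I with 𝓡(s) = R (i.e., the Bernoulli equation 𝓡(s) = R is solvable whenever R > R_c). -/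
open MeasureTheory Set

/-- The Bernoulli function `𝓡(s) = s²/2 + d(s) − Ω(1)` of the uniform stream
is continuous on `I = (σ₀, ∞)`, tends to `∞` as `s → ∞`, and for every `R > R_c = inf_I 𝓡`
the Bernoulli equation `𝓡(s) = R` has a solution `s ∈ I`. -/
theorem stmt_4 (ω : ℝ → ℝ) (hω : Continuous ω)
    (Ω : ℝ → ℝ) (hΩ : ∀ p, Ω p = ∫ r in (0:ℝ)..p, ω r)
    (σ₀ : ℝ) (hσ₀ : σ₀ = Real.sqrt (2 * max 0 (sSup (Ω '' Set.Icc 0 1))))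
    (d : ℝ → ℝ)
    (hd : ∀ s, d s = ∫ τ in (0:ℝ)..1, (Real.sqrt (s ^ 2 - 2 * Ω τ))⁻¹)
    (Rfun : ℝ → ℝ) (hRfun : ∀ s, Rfun s = (1 / 2) * s ^ 2 + d s - Ω 1)
    (Rc : ℝ) (hRc : Rc = sInf (Rfun '' Set.Ioi σ₀)) :
    ContinuousOn Rfun (Set.Ioi σ₀) ∧
    Filter.Tendsto Rfun Filter.atTop Filter.atTop ∧
    ∀ R : ℝ, Rc < R → ∃ s ∈ Set.Ioi σ₀, Rfun s = R := by
  -- Ω is continuous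
  have hΩc : Continuous Ω := by
    have : Continuous fun p : ℝ => ∫ r in (0:ℝ)..p, ω r :=
      intervalIntegral.continuous_primitive (fun a b => hω.intervalIntegrable a b) 0
    simpa [funext hΩ] using this
  set M : ℝ := max 0 (sSup (Ω '' Set.Icc 0 1)) with hM
  have hM0 : 0 ≤ M := le_max_left _ _
  have hσ₀0 : 0 ≤ σ₀ := hσ₀ ▸ Real.sqrt_nonneg _
  have hσ₀sq : σ₀ ^ 2 = 2 * M := by
    rw [hσ₀, Real.sq_sqrt (by positivity)]
  -- for τ ∈ [0,1], Ω τ ≤ M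
  have hbdd : BddAbove (Ω '' Set.Icc 0 1) :=
    (isCompact_Icc.image hΩc).bddAbove
  have hΩle : ∀ τ ∈ Set.Icc (0:ℝ) 1, Ω τ ≤ M := fun τ hτ =>
    le_trans (le_csSup hbdd (mem_image_of_mem _ hτ)) (le_max_right _ _)
  -- clamp function
  set c : ℝ → ℝ := fun τ => max 0 (min 1 τ) with hc
  have hcc : Continuous c := continuous_const.max (continuous_const.min continuous_id)
  have hcmem : ∀ τ, c τ ∈ Set.Icc (0:ℝ) 1 := fun τ =>
    ⟨le_max_left _ _, max_le zero_le_one (min_le_left _ _)⟩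
  have hceq : ∀ τ ∈ Set.Icc (0:ℝ) 1, c τ = τ := fun τ hτ => by
    simp [hc, min_eq_right hτ.2, max_eq_right hτ.1]
  -- positivity on Ioi σ₀
  have hpos : ∀ s : ℝ, σ₀ < s → ∀ τ : ℝ, 0 < s ^ 2 - 2 * Ω (c τ) := by
    intro s hs τ
    have h1 : σ₀ ^ 2 < s ^ 2 := by nlinarith
    have h2 : Ω (c τ) ≤ M := hΩle _ (hcmem τ)
    nlinarith
  -- the clamped integrand
  have key : ContinuousOn d (Set.Ioi σ₀) := by
    rw [continuousOn_iff_continuous_restrict]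
    have : Continuous fun p : (Set.Ioi σ₀) × ℝ =>
        (Real.sqrt ((p.1 : ℝ) ^ 2 - 2 * Ω (c p.2)))⁻¹ := by
      apply Continuous.inv₀
      · exact (Real.continuous_sqrt.comp
          (((continuous_subtype_val.comp continuous_fst).pow 2).sub
            (continuous_const.mul (hΩc.comp (hcc.comp continuous_snd)))))
      · rintro ⟨s, τ⟩
        exact ne_of_gt (Real.sqrt_pos.2 (hpos s s.2 τ))
    have hcont : Continuous fun s : Set.Ioi σ₀ =>
        ∫ τ in (0:ℝ)..1, (Real.sqrt ((s : ℝ) ^ 2 - 2 * Ω (c τ)))⁻¹ :=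
      intervalIntegral.continuous_parametric_intervalIntegral_of_continuous'
        (f := fun (s : Set.Ioi σ₀) (τ : ℝ) => (Real.sqrt ((s : ℝ) ^ 2 - 2 * Ω (c τ)))⁻¹)
        this 0 1
    have heq : (Set.Ioi σ₀).restrict d = fun s : Set.Ioi σ₀ =>
        ∫ τ in (0:ℝ)..1, (Real.sqrt ((s : ℝ) ^ 2 - 2 * Ω (c τ)))⁻¹ := by
      funext s
      rw [show (Set.Ioi σ₀).restrict d s = d s from rfl, hd]
      apply intervalIntegral.integral_congr
      intro τ hτ
      rw [Set.uIcc_of_le zero_le_one] at hτ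
      simp only [hceq τ hτ]
    change Continuous ((Set.Ioi σ₀).restrict d)
    rw [heq]
    exact hcont
  have hRc' : ContinuousOn Rfun (Set.Ioi σ₀) := by
    have : ContinuousOn (fun s => (1 / 2) * s ^ 2 + d s - Ω 1) (Set.Ioi σ₀) :=
      (((continuousOn_const.mul ((continuousOn_id).pow 2)).add key).sub continuousOn_const)
    simpa [funext hRfun] using this
  -- d ≥ 0
  have hd0 : ∀ s, 0 ≤ d s := by
    intro s
    rw [hd]
    apply intervalIntegral.integral_nonneg zero_le_one
    intro τ _
    positivity
  -- tendsto
  have htend : Filter.Tendsto Rfun Filter.atTop Filter.atTop := by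
    apply Filter.tendsto_atTop_mono (f := fun s => (1 / 2) * s ^ 2 - Ω 1)
    · intro s
      rw [hRfun]
      have := hd0 s
      linarith
    · apply Filter.tendsto_atTop_add_const_right
      have h2 : Filter.Tendsto (fun s : ℝ => s ^ 2) Filter.atTop Filter.atTop :=
        Filter.tendsto_pow_atTop two_ne_zero
      exact h2.const_mul_atTop (by norm_num : (0:ℝ) < 1/2)
  refine ⟨hRc', htend, ?_⟩
  intro R hR
  have hne : (Rfun '' Set.Ioi σ₀).Nonempty :=
    ⟨Rfun (σ₀ + 1), mem_image_of_mem _ (by simp : σ₀ + 1 ∈ Set.Ioi σ₀)⟩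
  obtain ⟨y, hy, hyR⟩ := exists_lt_of_csInf_lt hne (hRc ▸ hR)
  obtain ⟨s₁, hs₁, rfl⟩ := hy
  -- find s₂ ≥ s₁ with Rfun s₂ ≥ R
  have hev : ∀ᶠ s in Filter.atTop, R ≤ Rfun s := htend.eventually_ge_atTop R
  obtain ⟨s₂, hs₂, hs₂R⟩ := (hev.and (Filter.eventually_ge_atTop s₁)).exists
  have hIcc : Set.Icc s₁ s₂ ⊆ Set.Ioi σ₀ := fun x hx => lt_of_lt_of_le hs₁ hx.1
  have := intermediate_value_Icc hs₂R (hRc'.mono hIcc)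
  obtain ⟨s, hsmem, hsval⟩ := this ⟨hyR.le, hs₂⟩
  exact ⟨s, hIcc hsmem, hsval⟩
end

section
/- Let D ⊆ ℝ² be open, let Ψ : D → ℝ be twice continuously differentiable, let ξ : ℝ → ℝ be differentiable with (X, ξ(X)) ∈ D for all X, and let R ∈ ℝ. Assume that for all X: (i) Ψ(X, ξ(X)) = 1, (ii) (1/2)(Ψ_X² + Ψ_Y²)(X, ξ(X)) + ξ(X) = R (the Bernoulli condition), and (iii) Ψ_Y(X, ξ(X)) > 0. Define at each surface point ρ(X) = (1 + Ψ_X Ψ_{XY} + Ψ_Y Ψ_{YY})/(Ψ_Y (Ψ_X² + Ψ_Y²)^{1/2}) evaluated at (X, ξ(X)), and the (unit) normal derivative ∂_ν u = (−ξ'(X) u_X + u_Y)/√(1 + ξ'(X)²) evaluated at (X, ξ(X)). Then the function u = Ψ_X satisfies the linearized boundary condition ∂_ν u − ρ(X) u = 0 at (X, ξ(X)) for every X. -/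
open Set

/-- Partial derivative in the first (horizontal) variable. -/
noncomputable def pdX (f : ℝ × ℝ → ℝ) (p : ℝ × ℝ) : ℝ := fderiv ℝ f p (1, 0)

/-- Partial derivative in the second (vertical) variable. -/
noncomputable def pdY (f : ℝ × ℝ → ℝ) (p : ℝ × ℝ) : ℝ := fderiv ℝ f p (0, 1)

/-- If `Ψ = 1`, the Bernoulli condition
`(1/2)(Ψ_X² + Ψ_Y²) + ξ = R` and `Ψ_Y > 0` hold on the curve `Y = ξ(X)`, then `u = Ψ_X`
satisfies the linearized boundary condition `∂_ν u − ρ u = 0` there, with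
`ρ = (1 + Ψ_XΨ_{XY} + Ψ_YΨ_{YY})/(Ψ_Y(Ψ_X² + Ψ_Y²)^{1/2})` and
`∂_ν u = (−ξ'u_X + u_Y)/√(1 + ξ'²)`. -/
theorem stmt_6 (D : Set (ℝ × ℝ)) (hD : IsOpen D)
    (Ψ : ℝ × ℝ → ℝ) (hΨ : ContDiffOn ℝ 2 Ψ D)
    (ξ : ℝ → ℝ) (hξ : Differentiable ℝ ξ)
    (hmem : ∀ X, (X, ξ X) ∈ D)
    (R : ℝ)
    (hsurf : ∀ X, Ψ (X, ξ X) = 1)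
    (hBern : ∀ X, (1 / 2) * (pdX Ψ (X, ξ X) ^ 2 + pdY Ψ (X, ξ X) ^ 2) + ξ X = R)
    (hY : ∀ X, 0 < pdY Ψ (X, ξ X))
    (ρ : ℝ → ℝ)
    (hρ : ∀ X, ρ X =
      (1 + pdX Ψ (X, ξ X) * pdY (pdX Ψ) (X, ξ X)
         + pdY Ψ (X, ξ X) * pdY (pdY Ψ) (X, ξ X)) /
      (pdY Ψ (X, ξ X) * Real.sqrt (pdX Ψ (X, ξ X) ^ 2 + pdY Ψ (X, ξ X) ^ 2))) :
    ∀ X : ℝ,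
      (-(deriv ξ X) * pdX (pdX Ψ) (X, ξ X) + pdY (pdX Ψ) (X, ξ X)) /
          Real.sqrt (1 + (deriv ξ X) ^ 2)
        - ρ X * pdX Ψ (X, ξ X) = 0 := by
  set c : ℝ → ℝ × ℝ := fun x => (x, ξ x) with hc_def
  have hΨat : ∀ x : ℝ, ContDiffAt ℝ 2 Ψ (c x) := fun x =>
    hΨ.contDiffAt (hD.mem_nhds (hmem x))
  have hcder : ∀ x : ℝ, HasDerivAt c (1, deriv ξ x) x := fun x =>
    HasDerivAt.prodMk (hasDerivAt_id x) (hξ x).hasDerivAt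
  have hFc : ∀ x : ℝ, ContDiffAt ℝ 1 (fderiv ℝ Ψ) (c x) := fun x =>
    (hΨat x).fderiv_right (le_refl 2)
  -- linearity decomposition lemma
  have hpair : ∀ s : ℝ, ((1:ℝ), s) = ((1:ℝ),(0:ℝ)) + s • ((0:ℝ),(1:ℝ)) := by
    intro s; simp [Prod.ext_iff]
  have hlin : ∀ (L : ℝ × ℝ →L[ℝ] ℝ) (s : ℝ), L (1, s) = L (1,0) + s * L (0,1) := by
    intro L s
    rw [hpair s, map_add, map_smul, smul_eq_mul]
  have hlin2 : ∀ (L : (ℝ × ℝ) →L[ℝ] ((ℝ × ℝ) →L[ℝ] ℝ)) (s : ℝ) (w : ℝ × ℝ),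
      L (1, s) w = L (1,0) w + s * L (0,1) w := by
    intro L s w
    rw [hpair s, map_add, map_smul]
    simp
  have key : ∀ (x : ℝ) (v : ℝ × ℝ),
      HasDerivAt (fun y => fderiv ℝ Ψ (c y) v)
        (fderiv ℝ (fderiv ℝ Ψ) (c x) (1, deriv ξ x) v) x := by
    intro x v
    have h1 : HasFDerivAt (fderiv ℝ Ψ) (fderiv ℝ (fderiv ℝ Ψ) (c x)) (c x) :=
      ((hFc x).differentiableAt one_ne_zero).hasFDerivAt
    have h2 := ((ContinuousLinearMap.apply ℝ ℝ v).hasFDerivAt.comp (c x) h1).comp_hasDerivAt x (hcder x)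
    exact h2
  intro X
  set ξ' := deriv ξ X with hξ'
  set p := c X with hp
  set u := pdX Ψ p with hu
  set v := pdY Ψ p with hv
  set a := pdX (pdX Ψ) p with ha
  set b := pdY (pdX Ψ) p with hb
  set d := pdY (pdY Ψ) p with hd
  have hvpos : 0 < v := hY X
  have hsymm : fderiv ℝ (fderiv ℝ Ψ) p (0,1) (1,0) = fderiv ℝ (fderiv ℝ Ψ) p (1,0) (0,1) :=
    ((hΨat X).isSymmSndFDerivAt (by norm_num)) (0,1) (1,0)
  have hpdXΨ : HasFDerivAt (pdX Ψ)
      ((ContinuousLinearMap.apply ℝ ℝ ((1:ℝ),(0:ℝ))).comp (fderiv ℝ (fderiv ℝ Ψ) p)) p :=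
    (ContinuousLinearMap.apply ℝ ℝ ((1:ℝ),(0:ℝ))).hasFDerivAt.comp p
      (((hFc X).differentiableAt one_ne_zero).hasFDerivAt)
  have hpdYΨ : HasFDerivAt (pdY Ψ)
      ((ContinuousLinearMap.apply ℝ ℝ ((0:ℝ),(1:ℝ))).comp (fderiv ℝ (fderiv ℝ Ψ) p)) p :=
    (ContinuousLinearMap.apply ℝ ℝ ((0:ℝ),(1:ℝ))).hasFDerivAt.comp p
      (((hFc X).differentiableAt one_ne_zero).hasFDerivAt)
  have haa : a = fderiv ℝ (fderiv ℝ Ψ) p (1,0) (1,0) := by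
    rw [ha, pdX, hpdXΨ.fderiv]
    simp [ContinuousLinearMap.comp_apply]
  have hbb : b = fderiv ℝ (fderiv ℝ Ψ) p (1,0) (0,1) := by
    rw [hb, pdY, hpdXΨ.fderiv]
    simp only [ContinuousLinearMap.comp_apply, ContinuousLinearMap.apply_apply]
    exact hsymm
  have hdd : d = fderiv ℝ (fderiv ℝ Ψ) p (0,1) (0,1) := by
    rw [hd, pdY, hpdYΨ.fderiv]
    simp [ContinuousLinearMap.comp_apply]
  -- Identity 1 : u + ξ' v = 0
  have hId1 : u + ξ' * v = 0 := by
    have h1 : HasDerivAt (fun x => Ψ (c x)) (fderiv ℝ Ψ p (1, ξ')) X :=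
      ((hΨat X).differentiableAt (by norm_num)).hasFDerivAt.comp_hasDerivAt X (hcder X)
    have h2 : HasDerivAt (fun x => Ψ (c x)) 0 X := by
      have : (fun x => Ψ (c x)) = fun _ => (1:ℝ) := funext fun x => hsurf x
      rw [this]; exact hasDerivAt_const X 1
    have h3 : fderiv ℝ Ψ p (1, ξ') = 0 := h1.unique h2
    rw [hlin] at h3
    exact h3
  -- derivatives of pdX Ψ, pdY Ψ along the curve
  have hfa' : HasDerivAt (fun y => pdX Ψ (c y)) (a + ξ' * b) X := by
    have h := key X (1,0)
    rw [← hξ', hlin2, ← haa, hsymm, ← hbb] at h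
    exact h
  have hfb' : HasDerivAt (fun y => pdY Ψ (c y)) (b + ξ' * d) X := by
    have h := key X (0,1)
    rw [← hξ', hlin2, ← hbb, ← hdd] at h
    exact h
  -- Identity 2 : Bernoulli differentiated
  have hId2 : u * (a + ξ' * b) + v * (b + ξ' * d) + ξ' = 0 := by
    have hB1 := (((hfa'.pow 2).add (hfb'.pow 2)).const_mul ((1:ℝ)/2)).add (hξ X).hasDerivAt
    have hB2 : HasDerivAt
        (fun x => (1/2) * (pdX Ψ (c x) ^ 2 + pdY Ψ (c x) ^ 2) + ξ x) 0 X := by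
      have : (fun x => (1/2) * (pdX Ψ (c x) ^ 2 + pdY Ψ (c x) ^ 2) + ξ x) = fun _ => R :=
        funext fun x => hBern x
      rw [this]; exact hasDerivAt_const X R
    have h0 := hB1.unique hB2
    have e1 : pdX Ψ (c X) = u := rfl
    have e2 : pdY Ψ (c X) = v := rfl
    rw [e1, e2] at h0
    push_cast at h0
    rw [← hξ'] at h0
    ring_nf at h0 ⊢
    linarith [h0]
  -- square roots
  set t := Real.sqrt (1 + ξ' ^ 2) with ht
  have htpos : 0 < t := Real.sqrt_pos.2 (by positivity)
  have hs : Real.sqrt (u ^ 2 + v ^ 2) = t * v := by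
    have h1 : u ^ 2 + v ^ 2 = (t * v) ^ 2 := by
      have h2 : t ^ 2 = 1 + ξ' ^ 2 := Real.sq_sqrt (by positivity)
      have hu' : u = -(ξ' * v) := by linarith [hId1]
      rw [mul_pow, h2, hu']; ring
    rw [h1, Real.sqrt_sq (by positivity)]
  -- key algebraic identity
  have hkey : (-ξ' * a + b) * v ^ 2 = (1 + u * b + v * d) * u := by
    linear_combination v * hId2 - (a * v + 1 + u * b + v * d) * hId1
  -- final computation
  have hpe : ((X : ℝ), ξ X) = p := rfl
  rw [hρ X, hpe, ← hu, ← hv, ← hb, ← hd, hs]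
  have hvne : v ≠ 0 := ne_of_gt hvpos
  have htne : t ≠ 0 := ne_of_gt htpos
  field_simp
  linear_combination hkey
end

section
/- Let Ψ : ℝ² → ℝ and Ξ : ℝ → ℝ be differentiable, and let R, C₁ ≥ 0 and δ₁ > 0 be constants. Assume that for all X ∈ ℝ: (i) Ψ(X, Ξ(X)) = 1, (ii) (1/2)(Ψ_X² + Ψ_Y²)(X, Ξ(X)) + Ξ(X) = R, (iii) |Ξ'(X)| ≤ C₁, and (iv) R − Ξ(X) ≥ δ₁. Then Ψ_Y(X, Ξ(X))² ≥ 2δ₁/(1 + C₁²) for all X ∈ ℝ. -/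
open Set

/-- If `Ψ = 1` and the Bernoulli condition hold on the free surface
`Y = Ξ(X)`, the slope satisfies `|Ξ'| ≤ C₁` and `R − Ξ ≥ δ₁ > 0`, then
`Ψ_Y(X, Ξ(X))² ≥ 2δ₁/(1 + C₁²)` for all `X`. -/
theorem stmt_9 (Ψ : ℝ × ℝ → ℝ) (hΨ : Differentiable ℝ Ψ)
    (Ξ : ℝ → ℝ) (hΞ : Differentiable ℝ Ξ)
    (R C₁ δ₁ : ℝ) (hC₁ : 0 ≤ C₁) (hδ₁ : 0 < δ₁)
    (hsurf : ∀ X : ℝ, Ψ (X, Ξ X) = 1)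
    (hBern : ∀ X : ℝ, (1 / 2) * (pdX Ψ (X, Ξ X) ^ 2 + pdY Ψ (X, Ξ X) ^ 2) + Ξ X = R)
    (hslope : ∀ X : ℝ, |deriv Ξ X| ≤ C₁)
    (hdepth : ∀ X : ℝ, δ₁ ≤ R - Ξ X) :
    ∀ X : ℝ, 2 * δ₁ / (1 + C₁ ^ 2) ≤ pdY Ψ (X, Ξ X) ^ 2 := by
  intro X
  set d := deriv Ξ X with hd
  set p := (X, Ξ X) with hp
  -- chain rule: the surface curve
  have hcurve : HasDerivAt (fun x : ℝ => (x, Ξ x)) ((1 : ℝ), d) X :=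
    HasDerivAt.prodMk (hasDerivAt_id X) (hΞ X).hasDerivAt
  have hcomp : HasDerivAt (fun x : ℝ => Ψ (x, Ξ x)) (fderiv ℝ Ψ p ((1 : ℝ), d)) X :=
    ((hΨ p).hasFDerivAt).comp_hasDerivAt X hcurve
  have hconst : (fun x : ℝ => Ψ (x, Ξ x)) = fun _ => (1 : ℝ) := funext hsurf
  have hzero : fderiv ℝ Ψ p ((1 : ℝ), d) = 0 := by
    have := hcomp.deriv
    rw [hconst] at this
    simpa [deriv_const] using this.symm
  have hlin : fderiv ℝ Ψ p ((1 : ℝ), d) = pdX Ψ p + d * pdY Ψ p := by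
    have h1 : ((1 : ℝ), d) = ((1 : ℝ), (0 : ℝ)) + d • ((0 : ℝ), (1 : ℝ)) := by
      simp [Prod.ext_iff]
    rw [h1, map_add, map_smul]
    simp [pdX, pdY]
  have hXeq : pdX Ψ p = -(d * pdY Ψ p) := by linarith [hlin ▸ hzero]
  have hB := hBern X
  have hsum : pdX Ψ p ^ 2 + pdY Ψ p ^ 2 = 2 * (R - Ξ X) := by
    rw [hp] at *
    linarith
  have hdle : d ^ 2 ≤ C₁ ^ 2 := by
    have := hslope X
    nlinarith [abs_nonneg d, sq_abs d]
  have hsum2 : (1 + d ^ 2) * pdY Ψ p ^ 2 = 2 * (R - Ξ X) := by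
    rw [← hsum, hXeq]; ring
  have hpos : (0 : ℝ) < 1 + C₁ ^ 2 := by positivity
  rw [div_le_iff₀ hpos]
  nlinarith [hdepth X, sq_nonneg (pdY Ψ p)]
end

section
/- Let d > 0, let q : [0,d] → ℝ be continuous, and suppose there exists a twice continuously differentiable φ : [0,d] → ℝ with φ(y) > 0 for all y ∈ [0,d] and φ'' + qφ = 0 on [0,d]. Let τ ∈ ℝ and let w : [0,d] → ℝ be twice continuously differentiable with w'' + (q − τ²)w = 0 on [0,d], w(0) = 0 and w'(0) > 0. Then w(y) > 0 for all y ∈ (0,d]. Consequently, for each τ ∈ ℝ the boundary value problem γ'' + qγ − τ²γ = 0, γ(0) = 0, γ(d) = 1 has at most one solution. -/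
open Set Filter Real Topology

lemma sturm_pos_aux (d : ℝ) (hd : 0 < d) (q : ℝ → ℝ)
    (φ φ' φ'' : ℝ → ℝ)
    (hφ' : ∀ y ∈ Set.Icc 0 d, HasDerivWithinAt φ (φ' y) (Set.Icc 0 d) y)
    (hφ'' : ∀ y ∈ Set.Icc 0 d, HasDerivWithinAt φ' (φ'' y) (Set.Icc 0 d) y)
    (hφpos : ∀ y ∈ Set.Icc 0 d, 0 < φ y)
    (hφeq : ∀ y ∈ Set.Icc 0 d, φ'' y + q y * φ y = 0)
    (τ : ℝ) (w w' w'' : ℝ → ℝ)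
    (hw' : ∀ y ∈ Set.Icc 0 d, HasDerivWithinAt w (w' y) (Set.Icc 0 d) y)
    (hw'' : ∀ y ∈ Set.Icc 0 d, HasDerivWithinAt w' (w'' y) (Set.Icc 0 d) y)
    (hweq : ∀ y ∈ Set.Icc 0 d, w'' y + (q y - τ ^ 2) * w y = 0)
    (hw0 : w 0 = 0) (hw'0 : 0 < w' 0) :
    ∀ y ∈ Set.Ioc 0 d, 0 < w y := by
  have h0d : (0:ℝ) ∈ Icc 0 d := ⟨le_refl 0, hd.le⟩
  set h : ℝ → ℝ := fun y => φ y * w' y - w y * φ' y with hh_def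
  have hh : ∀ y ∈ Icc 0 d, HasDerivWithinAt h (τ ^ 2 * (φ y * w y)) (Icc 0 d) y := by
    intro y hy
    have H := ((hφ' y hy).mul (hw'' y hy)).sub ((hw' y hy).mul (hφ'' y hy))
    have e1 : w'' y = (τ ^ 2 - q y) * w y := by linear_combination hweq y hy
    have e2 : φ'' y = -(q y * φ y) := by linear_combination hφeq y hy
    refine H.congr_deriv ?_
    rw [e1, e2]; ring
  have hwcont : ContinuousOn w (Icc 0 d) := fun y hy => (hw' y hy).continuousWithinAt
  have hhcont : ContinuousOn h (Icc 0 d) := fun y hy => (hh y hy).continuousWithinAt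
  -- positivity near 0
  have hslope : Tendsto (slope w 0) (𝓝[Icc 0 d \ {0}] 0) (𝓝 (w' 0)) :=
    hasDerivWithinAt_iff_tendsto_slope.1 (hw' 0 h0d)
  have hev : ∀ᶠ y in 𝓝[Icc 0 d \ {0}] 0, 0 < slope w 0 y :=
    hslope.eventually (eventually_gt_nhds hw'0)
  rw [eventually_nhdsWithin_iff] at hev
  obtain ⟨ε, hε, hball⟩ := Metric.eventually_nhds_iff_ball.mp hev
  have hnear : ∀ y : ℝ, 0 < y → y < ε → y ≤ d → 0 < w y := by
    intro y hy0 hyε hyd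
    have hmem : y ∈ Metric.ball (0:ℝ) ε := by
      simp only [Metric.mem_ball, Real.dist_eq, sub_zero]
      rw [abs_of_pos hy0]; exact hyε
    have hs := hball y hmem ⟨⟨hy0.le, hyd⟩, by simp [hy0.ne']⟩
    rw [slope_def_field] at hs
    rw [hw0, sub_zero, sub_zero] at hs
    have := mul_pos hs hy0
    rwa [div_mul_cancel₀ _ hy0.ne'] at this
  by_contra hcon
  push_neg at hcon
  obtain ⟨y₁, hy₁, hwy₁⟩ := hcon
  set ε' : ℝ := min ε y₁ with hε'_def
  have hε'0 : 0 < ε' := lt_min hε hy₁.1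
  set T : Set ℝ := Icc (ε' / 2) y₁ ∩ w ⁻¹' (Iic 0) with hT_def
  have hTsub : T ⊆ Icc 0 d := fun y hy =>
    ⟨le_trans (by positivity) hy.1.1, le_trans hy.1.2 hy₁.2⟩
  have hTclosed : IsClosed T :=
    (hwcont.mono (fun y hy => ⟨le_trans (by positivity) hy.1,
      le_trans hy.2 hy₁.2⟩)).preimage_isClosed_of_isClosed isClosed_Icc isClosed_Iic
  have hTne : T.Nonempty := ⟨y₁, ⟨⟨le_trans (half_le_self hε'0.le) (min_le_right ε y₁),
    le_refl y₁⟩, hwy₁⟩⟩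
  have hTbdd : BddBelow T := (bddBelow_Icc).mono inter_subset_left
  set y₀ : ℝ := sInf T with hy₀_def
  have hy₀T : y₀ ∈ T := hTclosed.csInf_mem hTne hTbdd
  have hy₀I : y₀ ∈ Icc (ε' / 2) y₁ := hy₀T.1
  have hwy₀ : w y₀ ≤ 0 := hy₀T.2
  have y₀pos : 0 < y₀ := lt_of_lt_of_le (by positivity) hy₀I.1
  have y₀d : y₀ ≤ d := hy₀I.2.trans hy₁.2
  have hy₀Icc : y₀ ∈ Icc 0 d := ⟨y₀pos.le, y₀d⟩
  have wnn : ∀ y ∈ Ico 0 y₀, 0 ≤ w y := by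
    rintro y ⟨hy0, hyy₀⟩
    rcases eq_or_lt_of_le hy0 with hEq | hlt
    · rw [← hEq, hw0]
    · rcases lt_or_ge y ε' with h2 | h2
      · exact (hnear y hlt (lt_of_lt_of_le h2 (min_le_left ε y₁))
          (le_trans hyy₀.le y₀d)).le
      · by_contra hneg
        push_neg at hneg
        have hyT : y ∈ T := ⟨⟨le_trans (half_le_self hε'0.le) h2,
          hyy₀.le.trans hy₀I.2⟩, hneg.le⟩
        exact absurd (csInf_le hTbdd hyT) (not_le.mpr hyy₀)
  have wy₀0 : w y₀ = 0 := by
    refine le_antisymm hwy₀ ?_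
    have hclo : y₀ ∈ closure (Ico 0 y₀) := by
      rw [closure_Ico y₀pos.ne]; exact ⟨y₀pos.le, le_refl y₀⟩
    have hnb : (𝓝[Ico 0 y₀] y₀).NeBot := mem_closure_iff_nhdsWithin_neBot.mp hclo
    have htd : Tendsto w (𝓝[Ico 0 y₀] y₀) (𝓝 (w y₀)) :=
      ((hwcont y₀ hy₀Icc).mono
        (fun y hy => ⟨hy.1, hy.2.le.trans y₀d⟩)).tendsto
    exact ge_of_tendsto htd (eventually_nhdsWithin_of_forall wnn)
  have hsub : Icc (0:ℝ) y₀ ⊆ Icc 0 d := Icc_subset_Icc_right y₀d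
  have hmin : IsMinOn w (Icc 0 y₀) y₀ := by
    refine isMinOn_iff.mpr fun y hy => ?_
    rw [wy₀0]
    rcases eq_or_lt_of_le hy.2 with hEq | hlt
    · rw [hEq, wy₀0]
    · exact wnn y ⟨hy.1, hlt⟩
  have hw'y₀ : w' y₀ ≤ 0 := by
    have hfder : HasFDerivWithinAt w
        (ContinuousLinearMap.smulRight (1 : ℝ →L[ℝ] ℝ) (w' y₀)) (Icc 0 y₀) y₀ :=
      ((hw' y₀ hy₀Icc).mono hsub).hasFDerivWithinAt
    have hcone : (0:ℝ) - y₀ ∈ posTangentConeAt (Icc 0 y₀) y₀ := by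
      refine sub_mem_posTangentConeAt_of_segment_subset ?_
      rw [segment_symm, segment_eq_Icc y₀pos.le]
    have hle := hmin.localize.hasFDerivWithinAt_nonneg hfder hcone
    simp only [ContinuousLinearMap.smulRight_apply, ContinuousLinearMap.one_apply,
      smul_eq_mul, zero_sub, neg_mul] at hle
    nlinarith
  have hmono : MonotoneOn h (Icc 0 y₀) := by
    refine monotoneOn_of_hasDerivWithinAt_nonneg (convex_Icc 0 y₀) (hhcont.mono hsub)
      (f' := fun y => τ ^ 2 * (φ y * w y)) (fun x hx => ?_) (fun x hx => ?_)
    · rw [interior_Icc] at hx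
      exact (hh x (hsub (Ioo_subset_Icc_self hx))).mono
        (by rw [interior_Icc]; exact fun y hy => hsub (Ioo_subset_Icc_self hy))
    · rw [interior_Icc] at hx
      have h1 : 0 < φ x := hφpos x (hsub (Ioo_subset_Icc_self hx))
      have h2 : 0 ≤ w x := wnn x ⟨hx.1.le, hx.2⟩
      positivity
  have hkey : h 0 ≤ h y₀ := hmono ⟨le_refl 0, y₀pos.le⟩ ⟨y₀pos.le, le_refl y₀⟩ y₀pos.le
  have h0val : h 0 = φ 0 * w' 0 := by simp [hh_def, hw0]
  have hy₀val : h y₀ = φ y₀ * w' y₀ := by simp [hh_def, wy₀0]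
  have hφ0 : 0 < φ 0 := hφpos 0 h0d
  have hφy₀ : 0 < φ y₀ := hφpos y₀ hy₀Icc
  nlinarith [mul_pos hφ0 hw'0, mul_nonpos_of_nonneg_of_nonpos hφy₀.le hw'y₀]


lemma sturm_zero_aux (d : ℝ) (hd : 0 < d) (q : ℝ → ℝ)
    (hq : ContinuousOn q (Set.Icc 0 d))
    (τ : ℝ) (w w' w'' : ℝ → ℝ)
    (hw' : ∀ y ∈ Set.Icc 0 d, HasDerivWithinAt w (w' y) (Set.Icc 0 d) y)
    (hw'' : ∀ y ∈ Set.Icc 0 d, HasDerivWithinAt w' (w'' y) (Set.Icc 0 d) y)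
    (hweq : ∀ y ∈ Set.Icc 0 d, w'' y + (q y - τ ^ 2) * w y = 0)
    (hw0 : w 0 = 0) (hw'0 : w' 0 = 0) :
    ∀ y ∈ Set.Icc 0 d, w y = 0 := by
  obtain ⟨C, hC⟩ := isCompact_Icc.exists_bound_of_continuousOn
    (f := fun y => τ ^ 2 - q y) (continuousOn_const.sub hq)
  set K : ℝ := max 1 C with hK_def
  have hK1 : (1:ℝ) ≤ K := le_max_left 1 C
  have hf : ContinuousOn (fun y => (w y, w' y)) (Icc 0 d) :=
    ContinuousOn.prodMk (fun y hy => (hw' y hy).continuousWithinAt)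
      (fun y hy => (hw'' y hy).continuousWithinAt)
  have hf' : ∀ x ∈ Ico 0 d,
      HasDerivWithinAt (fun y => (w y, w' y)) (w' x, w'' x) (Ici x) x := by
    intro x hx
    have hmem : Icc (0:ℝ) d ∈ 𝓝[Ici x] x := Icc_mem_nhdsGE_of_mem hx
    exact ((hw' x (Ico_subset_Icc_self hx)).mono_of_mem_nhdsWithin hmem).prodMk
      ((hw'' x (Ico_subset_Icc_self hx)).mono_of_mem_nhdsWithin hmem)
  have ha : ‖((w 0 : ℝ), w' 0)‖ ≤ 0 := by
    simp [hw0, hw'0, Prod.norm_def]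
  have bound : ∀ x ∈ Ico 0 d,
      ‖((w' x : ℝ), w'' x)‖ ≤ K * ‖((w x : ℝ), w' x)‖ + 0 := by
    intro x hx
    have hxI : x ∈ Icc 0 d := Ico_subset_Icc_self hx
    have e1 : w'' x = (τ ^ 2 - q x) * w x := by linear_combination hweq x hxI
    have hCx := hC x hxI
    rw [Real.norm_eq_abs] at hCx
    have hC0 : (0:ℝ) ≤ C := le_trans (abs_nonneg _) hCx
    rw [Prod.norm_def, Prod.norm_def, add_zero]
    have hn : (0:ℝ) ≤ max ‖w x‖ ‖w' x‖ := le_trans (norm_nonneg _) (le_max_left _ _)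
    refine max_le ?_ ?_
    · exact le_trans (le_max_right ‖w x‖ ‖w' x‖) (le_mul_of_one_le_left hn hK1)
    · have : ‖w'' x‖ ≤ C * ‖w x‖ := by
        rw [e1, Real.norm_eq_abs, Real.norm_eq_abs, abs_mul]
        exact mul_le_mul_of_nonneg_right hCx (abs_nonneg _)
      refine le_trans this (le_trans ?_ (mul_le_mul_of_nonneg_left
        (le_max_left ‖w x‖ ‖w' x‖) (le_trans zero_le_one hK1)))
      exact mul_le_mul_of_nonneg_right (le_max_right 1 C) (norm_nonneg _)
  have hgron := norm_le_gronwallBound_of_norm_deriv_right_le hf hf' ha bound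
  intro y hy
  have h2 := hgron y hy
  rw [gronwallBound_ε0_δ0] at h2
  have h3 : ‖w y‖ ≤ 0 := le_trans (by rw [Prod.norm_def]; exact le_max_left _ _) h2
  simpa using le_antisymm h3 (norm_nonneg _)


/-- Sturm-type positivity: if the equation `φ'' + qφ = 0` admits a positive
solution `φ` on `[0,d]`, then any solution `w` of `w'' + (q − τ²)w = 0` with `w(0) = 0`,
`w'(0) > 0` is positive on `(0,d]`; consequently, for each `τ ∈ ℝ` the boundary value
problem `γ'' + qγ − τ²γ = 0`, `γ(0) = 0`, `γ(d) = 1` has at most one solution. -/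
theorem stmt_12 (d : ℝ) (hd : 0 < d)
    (q : ℝ → ℝ) (hq : ContinuousOn q (Set.Icc 0 d))
    (φ φ' φ'' : ℝ → ℝ)
    (hφ' : ∀ y ∈ Set.Icc 0 d, HasDerivWithinAt φ (φ' y) (Set.Icc 0 d) y)
    (hφ'' : ∀ y ∈ Set.Icc 0 d, HasDerivWithinAt φ' (φ'' y) (Set.Icc 0 d) y)
    (hφc : ContinuousOn φ'' (Set.Icc 0 d))
    (hφpos : ∀ y ∈ Set.Icc 0 d, 0 < φ y)
    (hφeq : ∀ y ∈ Set.Icc 0 d, φ'' y + q y * φ y = 0)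
    (τ : ℝ) (w w' w'' : ℝ → ℝ)
    (hw' : ∀ y ∈ Set.Icc 0 d, HasDerivWithinAt w (w' y) (Set.Icc 0 d) y)
    (hw'' : ∀ y ∈ Set.Icc 0 d, HasDerivWithinAt w' (w'' y) (Set.Icc 0 d) y)
    (hwc : ContinuousOn w'' (Set.Icc 0 d))
    (hweq : ∀ y ∈ Set.Icc 0 d, w'' y + (q y - τ ^ 2) * w y = 0)
    (hw0 : w 0 = 0) (hw'0 : 0 < w' 0) :
    (∀ y ∈ Set.Ioc 0 d, 0 < w y) ∧
    (∀ (τ' : ℝ) (γ₁ γ₁' γ₁'' γ₂ γ₂' γ₂'' : ℝ → ℝ),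
      (∀ y ∈ Set.Icc 0 d, HasDerivWithinAt γ₁ (γ₁' y) (Set.Icc 0 d) y) →
      (∀ y ∈ Set.Icc 0 d, HasDerivWithinAt γ₁' (γ₁'' y) (Set.Icc 0 d) y) →
      ContinuousOn γ₁'' (Set.Icc 0 d) →
      (∀ y ∈ Set.Icc 0 d, γ₁'' y + q y * γ₁ y - τ' ^ 2 * γ₁ y = 0) →
      γ₁ 0 = 0 → γ₁ d = 1 →
      (∀ y ∈ Set.Icc 0 d, HasDerivWithinAt γ₂ (γ₂' y) (Set.Icc 0 d) y) →
      (∀ y ∈ Set.Icc 0 d, HasDerivWithinAt γ₂' (γ₂'' y) (Set.Icc 0 d) y) →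
      ContinuousOn γ₂'' (Set.Icc 0 d) →
      (∀ y ∈ Set.Icc 0 d, γ₂'' y + q y * γ₂ y - τ' ^ 2 * γ₂ y = 0) →
      γ₂ 0 = 0 → γ₂ d = 1 →
      ∀ y ∈ Set.Icc 0 d, γ₁ y = γ₂ y) := by
  constructor
  · exact sturm_pos_aux d hd q φ φ' φ'' hφ' hφ'' hφpos hφeq τ w w' w'' hw' hw'' hweq hw0 hw'0
  · intro τ' γ₁ γ₁' γ₁'' γ₂ γ₂' γ₂'' h1' h1'' h1c h1eq h10 h1d h2' h2'' h2c h2eq h20 h2d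
    have hδ' : ∀ y ∈ Set.Icc 0 d,
        HasDerivWithinAt (fun z => γ₁ z - γ₂ z) (γ₁' y - γ₂' y) (Set.Icc 0 d) y :=
      fun y hy => (h1' y hy).sub (h2' y hy)
    have hδ'' : ∀ y ∈ Set.Icc 0 d,
        HasDerivWithinAt (fun z => γ₁' z - γ₂' z) (γ₁'' y - γ₂'' y) (Set.Icc 0 d) y :=
      fun y hy => (h1'' y hy).sub (h2'' y hy)
    have hδeq : ∀ y ∈ Set.Icc 0 d,
        (γ₁'' y - γ₂'' y) + (q y - τ' ^ 2) * (γ₁ y - γ₂ y) = 0 := by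
      intro y hy
      linear_combination h1eq y hy - h2eq y hy
    have hδ0 : γ₁ 0 - γ₂ 0 = 0 := by rw [h10, h20, sub_zero]
    have hδd : γ₁ d - γ₂ d = 0 := by rw [h1d, h2d, sub_self]
    have hdIoc : d ∈ Set.Ioc (0:ℝ) d := ⟨hd, le_refl d⟩
    rcases lt_trichotomy (γ₁' 0 - γ₂' 0) 0 with hlt | heq0 | hgt
    · -- apply positivity to γ₂ - γ₁
      have hpos := sturm_pos_aux d hd q φ φ' φ'' hφ' hφ'' hφpos hφeq τ'
        (fun z => γ₂ z - γ₁ z) (fun z => γ₂' z - γ₁' z) (fun z => γ₂'' z - γ₁'' z)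
        (fun y hy => (h2' y hy).sub (h1' y hy))
        (fun y hy => (h2'' y hy).sub (h1'' y hy))
        (fun y hy => by linear_combination h2eq y hy - h1eq y hy)
        (show γ₂ 0 - γ₁ 0 = 0 by rw [h10, h20, sub_zero]) (show 0 < γ₂' 0 - γ₁' 0 by linarith)
      have := hpos d hdIoc
      simp only [h1d, h2d, sub_self] at this
      exact absurd this (lt_irrefl 0)
    · -- both initial conditions vanish: use uniqueness
      intro y hy
      have := sturm_zero_aux d hd q hq τ'
        (fun z => γ₁ z - γ₂ z) (fun z => γ₁' z - γ₂' z) (fun z => γ₁'' z - γ₂'' z)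
        hδ' hδ'' hδeq hδ0 heq0 y hy
      change γ₁ y - γ₂ y = 0 at this
      linarith
    · have hpos := sturm_pos_aux d hd q φ φ' φ'' hφ' hφ'' hφpos hφeq τ'
        (fun z => γ₁ z - γ₂ z) (fun z => γ₁' z - γ₂' z) (fun z => γ₁'' z - γ₂'' z)
        hδ' hδ'' hδeq hδ0 hgt
      have := hpos d hdIoc
      simp only [h1d, h2d, sub_self] at this
      exact absurd this (lt_irrefl 0)
end

section
/- Let ω : ℝ → ℝ be continuously differentiable, let d > 0, and let U : [0,d] → ℝ be twice continuously differentiable with U'' + ω(U) = 0 on [0,d], U'(y) > 0 for all y ∈ [0,d], U(0) = 0 and U(d) = 1. Set κ = U'(d) and J = ∫₀^d U'(y)^{−2} dy, and define γ₀(y) = U'(y)·(∫₀^y U'(s)^{−2} ds)/(κ J). Then: (i) γ₀ is twice continuously differentiable and satisfies γ₀'' + ω'(U)γ₀ = 0 on [0,d], γ₀(0) = 0, γ₀(d) = 1; and (ii) the dispersion value σ(0) := κγ₀'(d) − κ^{−1} + ω(1) equals (1/κ)(1/J − 1), so that σ(0) < 0 if and only if ∫₀^d U'(y)^{−2} dy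 > 1. -/
open Set MeasureTheory

/-- For the uniform stream `U` (with `U'' + ω(U) = 0`, `U' > 0`,
`U(0) = 0`, `U(d) = 1`, `κ = U'(d)`, `J = ∫₀^d U'⁻²`), the function
`γ₀(y) = U'(y)·(∫₀^y U'⁻²)/(κJ)` solves the dispersion boundary value problem at `τ = 0`:
`γ₀'' + ω'(U)γ₀ = 0`, `γ₀(0) = 0`, `γ₀(d) = 1`, and the dispersion value
`σ(0) = κγ₀'(d) − κ⁻¹ + ω(1)` equals `(1/κ)(1/J − 1)`, hence `σ(0) < 0 ↔ J > 1`. -/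
theorem stmt_13 (ω : ℝ → ℝ) (hω : ContDiff ℝ 1 ω)
    (d : ℝ) (hd : 0 < d)
    (U U' U'' : ℝ → ℝ)
    (hU' : ∀ y ∈ Set.Icc 0 d, HasDerivWithinAt U (U' y) (Set.Icc 0 d) y)
    (hU'' : ∀ y ∈ Set.Icc 0 d, HasDerivWithinAt U' (U'' y) (Set.Icc 0 d) y)
    (hU''c : ContinuousOn U'' (Set.Icc 0 d))
    (heq : ∀ y ∈ Set.Icc 0 d, U'' y + ω (U y) = 0)
    (hpos : ∀ y ∈ Set.Icc 0 d, 0 < U' y)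
    (h0 : U 0 = 0) (h1 : U d = 1)
    (κ J : ℝ) (hκ : κ = U' d)
    (hJ : J = ∫ y in (0:ℝ)..d, ((U' y) ^ 2)⁻¹)
    (γ₀ : ℝ → ℝ)
    (hγ₀ : ∀ y, γ₀ y = U' y * (∫ s in (0:ℝ)..y, ((U' s) ^ 2)⁻¹) / (κ * J)) :
    ∃ γ₀' γ₀'' : ℝ → ℝ,
      (∀ y ∈ Set.Icc 0 d, HasDerivWithinAt γ₀ (γ₀' y) (Set.Icc 0 d) y) ∧
      (∀ y ∈ Set.Icc 0 d, HasDerivWithinAt γ₀' (γ₀'' y) (Set.Icc 0 d) y) ∧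
      ContinuousOn γ₀'' (Set.Icc 0 d) ∧
      (∀ y ∈ Set.Icc 0 d, γ₀'' y + deriv ω (U y) * γ₀ y = 0) ∧
      γ₀ 0 = 0 ∧ γ₀ d = 1 ∧
      κ * γ₀' d - κ⁻¹ + ω 1 = (1 / κ) * (1 / J - 1) ∧
      (κ * γ₀' d - κ⁻¹ + ω 1 < 0 ↔ 1 < J) := by
  have hγfun : γ₀ = fun y => U' y * (∫ s in (0:ℝ)..y, ((U' s) ^ 2)⁻¹) / (κ * J) :=
    funext hγ₀
  set S := Set.Icc (0:ℝ) d with hS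
  have hmemd : d ∈ S := ⟨hd.le, le_rfl⟩
  have hmem0 : (0:ℝ) ∈ S := ⟨le_rfl, hd.le⟩
  have contU' : ContinuousOn U' S := fun y hy => (hU'' y hy).continuousWithinAt
  have hne : ∀ y ∈ S, U' y ≠ 0 := fun y hy => (hpos y hy).ne'
  set f : ℝ → ℝ := fun s => ((U' s) ^ 2)⁻¹ with hf
  have contf : ContinuousOn f S :=
    (contU'.pow 2).inv₀ fun y hy => pow_ne_zero 2 (hne y hy)
  -- extend f continuously to all of ℝ
  set fe : ℝ → ℝ := Set.IccExtend hd.le (S.restrict f) with hfe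
  have hfeq : ∀ y ∈ S, fe y = f y := fun y hy => by
    simp [hfe, Set.IccExtend_of_mem hd.le _ hy]
    rfl
  have contfe : Continuous fe :=
    (continuousOn_iff_continuous_restrict.mp contf).Icc_extend'
  set I : ℝ → ℝ := fun y => ∫ s in (0:ℝ)..y, f s with hI
  set g : ℝ → ℝ := fun y => ∫ s in (0:ℝ)..y, fe s with hg
  have hgI : Set.EqOn I g S := by
    intro y hy
    refine intervalIntegral.integral_congr fun s hs => (hfeq s ?_).symm
    have : Set.uIcc (0:ℝ) y ⊆ S := by
      rw [Set.uIcc_of_le hy.1]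
      exact Set.Icc_subset_Icc le_rfl hy.2
    exact this hs
  have hgd : ∀ y, HasDerivAt g (fe y) y := fun y =>
    (contfe.integral_hasStrictDerivAt 0 y).hasDerivAt
  have hId : ∀ y ∈ S, HasDerivWithinAt I (f y) S y := by
    intro y hy
    have := ((hgd y).hasDerivWithinAt.congr (fun x hx => hgI hx) (hgI hy))
    rwa [hfeq y hy] at this
  have contI : ContinuousOn I S := fun y hy => (hId y hy).continuousWithinAt
  have contU : ContinuousOn U S := fun y hy => (hU' y hy).continuousWithinAt
  -- positivity of J and κ
  have hκpos : 0 < κ := hκ ▸ hpos d hmemd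
  have hJpos : 0 < J := by
    rw [hJ]
    refine intervalIntegral.intervalIntegral_pos_of_pos_on ?_ ?_ hd
    · exact (contf.mono (by rw [Set.uIcc_of_le hd.le])).intervalIntegrable
    · intro x hx
      exact inv_pos.mpr (pow_pos (hpos x ⟨hx.1.le, hx.2.le⟩) 2)
  have hκJ : κ * J ≠ 0 := by positivity
  -- define the derivatives
  refine ⟨fun y => (U'' y * I y + (U' y)⁻¹) / (κ * J),
    fun y => (-(deriv ω (U y) * U' y * I y)) / (κ * J), ?_, ?_, ?_, ?_, ?_, ?_, ?_, ?_⟩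
  · -- first derivative
    intro y hy
    rw [hγfun]
    have h := ((hU'' y hy).mul (hId y hy)).div_const (κ * J)
    refine h.congr_deriv ?_
    have h2 : U' y * ((U' y) ^ 2)⁻¹ = (U' y)⁻¹ := by
      field_simp [sq]
    simp only [hf]
    rw [h2]
  · -- second derivative
    intro y hy
    have hωd : HasDerivAt ω (deriv ω (U y)) (U y) :=
      ((hω.differentiable one_ne_zero) (U y)).hasDerivAt
    have hU''d : HasDerivWithinAt U'' (-(deriv ω (U y) * U' y)) S y := by
      have h := (hωd.comp_hasDerivWithinAt y (hU' y hy)).neg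
      refine h.congr (fun x hx => ?_) ?_
      · have := heq x hx; simp only [Pi.neg_apply, Function.comp_apply]; linarith
      · have := heq y hy; simp only [Pi.neg_apply, Function.comp_apply]; linarith
    have hinv : HasDerivWithinAt (fun x => (U' x)⁻¹) (-(U'' y) / (U' y) ^ 2) S y :=
      (hU'' y hy).inv (hne y hy)
    have h := ((hU''d.mul (hId y hy)).add hinv).div_const (κ * J)
    refine h.congr_deriv ?_
    have hU'ne := hne y hy
    simp only [hf]
    field_simp [hU'ne]
    ring
  · -- continuity of second derivative
    have hderivω : Continuous (deriv ω) := hω.continuous_deriv le_rfl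
    exact ((((hderivω.comp_continuousOn contU).mul contU').mul contI).neg).div_const _
  · -- ODE
    intro y hy
    rw [hγ₀ y]
    have : (∫ s in (0:ℝ)..y, ((U' s) ^ 2)⁻¹) = I y := rfl
    rw [this]
    field_simp
    ring
  · rw [hγ₀ 0]; simp
  · rw [hγ₀ d, ← hJ, ← hκ]
    exact div_self hκJ
  · -- dispersion value
    have hId' : I d = J := hJ.symm
    have hU''d : U'' d = -ω 1 := by have := heq d hmemd; rw [h1] at this; linarith
    simp only [hId', hU''d, ← hκ]
    field_simp
    ring
  · have hId' : I d = J := hJ.symm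
    have hU''d : U'' d = -ω 1 := by have := heq d hmemd; rw [h1] at this; linarith
    simp only [hId', hU''d, ← hκ]
    have key : κ * ((-ω 1 * J + κ⁻¹) / (κ * J)) - κ⁻¹ + ω 1 = (1 / κ) * (1 / J - 1) := by
      field_simp
      ring
    rw [key]
    constructor
    · intro h
      by_contra hle
      push_neg at hle
      have h1J : 1 ≤ 1 / J := by
        rw [le_div_iff₀ hJpos]; linarith
      have : 0 ≤ (1 / κ) * (1 / J - 1) := by
        apply mul_nonneg (by positivity); linarith
      linarith
    · intro h
      have h1J : 1 / J < 1 := by rw [div_lt_one hJpos]; exact h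
      have : (1 / J - 1) < 0 := by linarith
      exact mul_neg_of_pos_of_neg (by positivity) this
end

section
/- Let ε > 0 and let θ₁, θ₂ : (−ε, ε) → ℝ be real-analytic functions with θ₁(0) = θ₂(0) = 0. Assume that for every τ ∈ (−ε, ε) the pair of values is symmetric under τ ↦ −τ, i.e., either (θ₁(−τ) = θ₁(τ) and θ₂(−τ) = θ₂(τ)) or (θ₁(−τ) = θ₂(τ) and θ₂(−τ) = θ₁(τ)). Then at least one of the following holds on (−ε, ε): (a) θ₁ = θ₂ and θ₁ is an even function; (b) θ₁(−τ) = θ₂(τ) for all τ; (c) both θ₁ and θ₂ are even functions. -/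
open Set

lemma stmt14_key {S : Set ℝ} (hS : IsOpen S) (hSc : IsPreconnected S) {x₀ : ℝ} (hx₀ : x₀ ∈ S)
    {f g : ℝ → ℝ} (hf : AnalyticOnNhd ℝ f S) (hg : AnalyticOnNhd ℝ g S)
    (h : ∀ τ ∈ S, f τ = 0 ∨ g τ = 0) :
    Set.EqOn f 0 S ∨ Set.EqOn g 0 S := by
  by_cases hf0 : Set.EqOn f 0 S
  · exact Or.inl hf0
  right
  rcases (hf x₀ hx₀).eventually_eq_zero_or_eventually_ne_zero with h1 | h2
  · exact absurd (hf.eqOn_zero_of_preconnected_of_frequently_eq_zero hSc hx₀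
      ((h1.filter_mono nhdsWithin_le_nhds).frequently)) hf0
  · apply hg.eqOn_zero_of_preconnected_of_frequently_eq_zero hSc hx₀
    have hmem : ∀ᶠ z in nhdsWithin x₀ {x₀}ᶜ, z ∈ S :=
      eventually_nhdsWithin_of_eventually_nhds (hS.eventually_mem hx₀)
    apply ((h2.and hmem).mono ?_).frequently
    rintro z ⟨hz1, hz2⟩
    rcases h z hz2 with h | h
    · exact absurd h hz1
    · exact h

/-- If the pair of real-analytic eigenvalue branches `θ₁, θ₂` on `(−ε,ε)`
with `θ₁(0) = θ₂(0) = 0` is pointwise symmetric under `τ ↦ −τ`, then either (a) `θ₁ = θ₂`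
and `θ₁` is even, or (b) `θ₁(−τ) = θ₂(τ)` for all `τ`, or (c) both `θ₁` and `θ₂` are even. -/
theorem stmt_14 (ε : ℝ) (hε : 0 < ε) (θ₁ θ₂ : ℝ → ℝ)
    (h₁ : AnalyticOnNhd ℝ θ₁ (Set.Ioo (-ε) ε))
    (h₂ : AnalyticOnNhd ℝ θ₂ (Set.Ioo (-ε) ε))
    (h0₁ : θ₁ 0 = 0) (h0₂ : θ₂ 0 = 0)
    (hsym : ∀ τ ∈ Set.Ioo (-ε) ε,
      (θ₁ (-τ) = θ₁ τ ∧ θ₂ (-τ) = θ₂ τ) ∨ (θ₁ (-τ) = θ₂ τ ∧ θ₂ (-τ) = θ₁ τ)) :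
    (∀ τ ∈ Set.Ioo (-ε) ε, θ₁ τ = θ₂ τ ∧ θ₁ (-τ) = θ₁ τ) ∨
    (∀ τ ∈ Set.Ioo (-ε) ε, θ₁ (-τ) = θ₂ τ) ∨
    (∀ τ ∈ Set.Ioo (-ε) ε, θ₁ (-τ) = θ₁ τ ∧ θ₂ (-τ) = θ₂ τ) := by
  set S : Set ℝ := Set.Ioo (-ε) ε with hSdef
  have hS : IsOpen S := isOpen_Ioo
  have hSc : IsPreconnected S := isPreconnected_Ioo
  have h0S : (0 : ℝ) ∈ S := ⟨by linarith, hε⟩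
  have hnegS : ∀ x ∈ S, -x ∈ S := by
    rintro x ⟨hx1, hx2⟩; exact ⟨by linarith, by linarith⟩
  have hneg₁ : AnalyticOnNhd ℝ (fun τ => θ₁ (-τ)) S := fun x hx =>
    (h₁ (-x) (hnegS x hx)).comp (analyticAt_id.neg)
  have hneg₂ : AnalyticOnNhd ℝ (fun τ => θ₂ (-τ)) S := fun x hx =>
    (h₂ (-x) (hnegS x hx)).comp (analyticAt_id.neg)
  have hf : AnalyticOnNhd ℝ (fun τ => θ₁ (-τ) - θ₂ τ) S := hneg₁.sub h₂
  have hg : AnalyticOnNhd ℝ (fun τ => θ₁ (-τ) - θ₁ τ) S := hneg₁.sub h₁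
  have hk : AnalyticOnNhd ℝ (fun τ => θ₂ (-τ) - θ₂ τ) S := hneg₂.sub h₂
  have hfg : ∀ τ ∈ S, θ₁ (-τ) - θ₂ τ = 0 ∨ θ₁ (-τ) - θ₁ τ = 0 := by
    intro τ hτ
    rcases hsym τ hτ with ⟨ha, _⟩ | ⟨hb, _⟩
    · exact Or.inr (by linarith)
    · exact Or.inl (by linarith)
  have hfk : ∀ τ ∈ S, θ₁ (-τ) - θ₂ τ = 0 ∨ θ₂ (-τ) - θ₂ τ = 0 := by
    intro τ hτ
    rcases hsym τ hτ with ⟨_, ha⟩ | ⟨hb, _⟩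
    · exact Or.inr (by linarith)
    · exact Or.inl (by linarith)
  rcases stmt14_key hS hSc h0S hf hg hfg with hF | hG
  · exact Or.inr (Or.inl (fun τ hτ => by have := hF hτ; simpa [sub_eq_zero] using this))
  · rcases stmt14_key hS hSc h0S hf hk hfk with hF | hK
    · exact Or.inr (Or.inl (fun τ hτ => by have := hF hτ; simpa [sub_eq_zero] using this))
    · refine Or.inr (Or.inr (fun τ hτ => ⟨?_, ?_⟩))
      · have := hG hτ; simpa [sub_eq_zero] using this
      · have := hK hτ; simpa [sub_eq_zero] using this
end

section
/- Let ε > 0 and let θ₁, θ₂ : (−ε, ε) → ℝ be real-analytic functions, neither identically zero, with θ₁(0) = θ₂(0) = 0, such that for every τ ∈ (−ε, ε) either (θ₁(−τ) = θ₁(τ) and θ₂(−τ) = θ₂(τ)) or (θ₁(−τ) = θ₂(τ) and θ₂(−τ) = θ₁(τ)). Define m(τ) = min(θ₁(τ), θ₂(τ)) and M(τ) = max(θ₁(τ), θ₂(τ)), and assume m(τ) < 0 < M(τ) for all τ ∈ (0, ε). Then one of the following holds: (i) there exist an integer n ≥ 1 and κ > 0 such that, as τ → 0⁺, m(τ) =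 −κτ^{2n−1} + O(τ^{2n}) and M(τ) = κτ^{2n−1} + O(τ^{2n}); or (ii) there exist integers n, m ≥ 1 and constants A < 0 < B such that, as τ → 0⁺, m(τ) = Aτ^{2n} + O(τ^{2n+1}) and M(τ) = Bτ^{2m} + O(τ^{2m+1}). -/
open Set Filter Topology

lemma extract_delta {P : ℝ → Prop} (h : ∀ᶠ τ in 𝓝[>] (0:ℝ), P τ) :
    ∃ δ : ℝ, 0 < δ ∧ ∀ τ : ℝ, 0 < τ → τ < δ → P τ := by
  rw [eventually_iff, mem_nhdsGT_iff_exists_Ioo_subset] at h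
  obtain ⟨u, hu, hsub⟩ := h
  exact ⟨u, hu, fun τ h1 h2 => hsub ⟨h1, h2⟩⟩

lemma extract_delta' {P : ℝ → Prop} (h : ∀ᶠ τ in 𝓝 (0:ℝ), P τ) :
    ∃ δ : ℝ, 0 < δ ∧ ∀ τ : ℝ, |τ| < δ → P τ := by
  rw [Metric.eventually_nhds_iff] at h
  obtain ⟨δ, hδ, hh⟩ := h
  exact ⟨δ, hδ, fun τ hτ => hh (by simpa [Real.dist_eq] using hτ)⟩

lemma expand (θ : ℝ → ℝ) (hθ : AnalyticAt ℝ θ 0) (h0 : θ 0 = 0)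
    (hne : ¬ ∀ᶠ τ in 𝓝 (0:ℝ), θ τ = 0) :
    ∃ p : ℕ, 1 ≤ p ∧ ∃ g : ℝ → ℝ, AnalyticAt ℝ g 0 ∧ g 0 ≠ 0 ∧
      (∀ᶠ τ in 𝓝 (0:ℝ), θ τ = τ ^ p * g τ) ∧
      ∃ C δC : ℝ, 0 < C ∧ 0 < δC ∧ ∀ σ : ℝ, |σ| < δC → |g σ - g 0| ≤ C * |σ| := by
  obtain ⟨p, g, hg, hg0, hfac⟩ := hθ.exists_eventuallyEq_pow_smul_nonzero_iff.mpr hne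
  have hfac' : ∀ᶠ τ in 𝓝 (0:ℝ), θ τ = τ ^ p * g τ := by
    filter_upwards [hfac] with τ h; simpa [smul_eq_mul] using h
  have hp : 1 ≤ p := by
    rcases Nat.eq_zero_or_pos p with h | h
    · exfalso; apply hg0
      have := hfac'.self_of_nhds
      simp [h, h0] at this; exact this.symm
    · exact h
  have hd := hg.differentiableAt.hasDerivAt
  rw [hasDerivAt_iff_isLittleO] at hd
  have hb := hd.def one_pos
  obtain ⟨δC, hδC, hbd⟩ := extract_delta' hb
  refine ⟨p, hp, g, hg, hg0, hfac', 1 + |deriv g 0|, δC, by positivity, hδC, fun σ hσ => ?_⟩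
  have h1 := hbd σ hσ
  simp only [sub_zero, smul_eq_mul, Real.norm_eq_abs, one_mul] at h1
  calc |g σ - g 0| = |(g σ - g 0 - σ * deriv g 0) + σ * deriv g 0| := by ring_nf
    _ ≤ |g σ - g 0 - σ * deriv g 0| + |σ * deriv g 0| := abs_add_le _ _
    _ ≤ |σ| + |σ| * |deriv g 0| := by rw [abs_mul]; gcongr
    _ = (1 + |deriv g 0|) * |σ| := by ring

lemma bound_lemma (θ g : ℝ → ℝ) (p : ℕ)
    (hf : ∀ᶠ τ in 𝓝 (0:ℝ), θ τ = τ ^ p * g τ)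
    (Ca δa : ℝ) (hCa : 0 < Ca) (hδa : 0 < δa)
    (hba : ∀ σ : ℝ, |σ| < δa → |g σ - g 0| ≤ Ca * |σ|) :
    ∃ C δ : ℝ, 0 < C ∧ 0 < δ ∧ ∀ τ : ℝ, 0 < τ → τ < δ →
      |θ τ - g 0 * τ ^ p| ≤ C * τ ^ (p + 1) := by
  obtain ⟨δ₁, hδ₁, hfd⟩ := extract_delta' hf
  refine ⟨Ca, min δ₁ δa, hCa, lt_min hδ₁ hδa, fun τ hτ0 hτδ => ?_⟩
  have habs : |τ| < min δ₁ δa := by rwa [abs_of_pos hτ0]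
  rw [hfd τ (habs.trans_le (min_le_left _ _))]
  have hle := hba τ (habs.trans_le (min_le_right _ _))
  rw [abs_of_pos hτ0] at hle
  calc |τ ^ p * g τ - g 0 * τ ^ p| = τ ^ p * |g τ - g 0| := by
        rw [show τ^p * g τ - g 0 * τ^p = τ^p * (g τ - g 0) by ring, abs_mul, abs_pow,
          abs_of_pos hτ0]
    _ ≤ τ ^ p * (Ca * τ) := mul_le_mul_of_nonneg_left hle (pow_nonneg hτ0.le p)
    _ = Ca * τ ^ (p+1) := by rw [pow_succ]; ring

lemma even_order (θ g : ℝ → ℝ) (p : ℕ) (hg : AnalyticAt ℝ g 0) (hg0 : g 0 ≠ 0)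
    (hf : ∀ᶠ τ in 𝓝 (0:ℝ), θ τ = τ ^ p * g τ)
    (he : ∀ᶠ τ in 𝓝[≠] (0:ℝ), θ (-τ) = θ τ) : Even p := by
  rcases Nat.even_or_odd p with h | h
  · exact h
  exfalso
  have hneg : Tendsto (fun τ : ℝ => -τ) (𝓝 0) (𝓝 (0:ℝ)) := by
    simpa using continuous_neg.tendsto (0:ℝ)
  have hf' : ∀ᶠ τ in 𝓝 (0:ℝ), θ (-τ) = (-τ) ^ p * g (-τ) := hneg.eventually hf
  have hkey : ∀ᶠ τ in 𝓝[≠] (0:ℝ), -g (-τ) = g τ := by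
    filter_upwards [hf.filter_mono nhdsWithin_le_nhds, hf'.filter_mono nhdsWithin_le_nhds,
      he, self_mem_nhdsWithin] with τ h1 h2 h3 hτ
    have hτ0 : τ ≠ 0 := hτ
    have heq : (-τ)^p * g (-τ) = τ^p * g τ := by rw [← h2, h3, h1]
    rw [h.neg_pow] at heq
    have hpne : (τ:ℝ)^p ≠ 0 := pow_ne_zero p hτ0
    exact mul_left_cancel₀ hpne (by rw [mul_neg, ← neg_mul]; exact heq)
  have t1 : Tendsto g (𝓝[≠] (0:ℝ)) (𝓝 (g 0)) :=
    hg.continuousAt.tendsto.mono_left nhdsWithin_le_nhds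
  have t2 : Tendsto (fun τ : ℝ => -g (-τ)) (𝓝[≠] (0:ℝ)) (𝓝 (-g 0)) :=
    ((hg.continuousAt.tendsto.comp hneg).neg).mono_left nhdsWithin_le_nhds
  have := tendsto_nhds_unique (t2.congr' hkey) t1
  apply hg0; linarith

lemma key (θa θb : ℝ → ℝ)
    (ha : AnalyticAt ℝ θa 0) (hb : AnalyticAt ℝ θb 0)
    (h0a : θa 0 = 0) (h0b : θb 0 = 0)
    (hsym : ∀ᶠ τ in 𝓝 (0:ℝ),
      (θa (-τ) = θa τ ∧ θb (-τ) = θb τ) ∨ (θa (-τ) = θb τ ∧ θb (-τ) = θa τ))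
    (hab : ∀ᶠ τ in 𝓝[>] (0:ℝ), θa τ < 0 ∧ 0 < θb τ) :
    (∃ n : ℕ, 1 ≤ n ∧ ∃ κ : ℝ, 0 < κ ∧
      (∃ C δ : ℝ, 0 < C ∧ 0 < δ ∧ ∀ τ : ℝ, 0 < τ → τ < δ →
        |θa τ - (-(κ * τ ^ (2 * n - 1)))| ≤ C * τ ^ (2 * n)) ∧
      (∃ C δ : ℝ, 0 < C ∧ 0 < δ ∧ ∀ τ : ℝ, 0 < τ → τ < δ →
        |θb τ - κ * τ ^ (2 * n - 1)| ≤ C * τ ^ (2 * n))) ∨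
    (∃ n m' : ℕ, 1 ≤ n ∧ 1 ≤ m' ∧ ∃ A B : ℝ, A < 0 ∧ 0 < B ∧
      (∃ C δ : ℝ, 0 < C ∧ 0 < δ ∧ ∀ τ : ℝ, 0 < τ → τ < δ →
        |θa τ - A * τ ^ (2 * n)| ≤ C * τ ^ (2 * n + 1)) ∧
      (∃ C δ : ℝ, 0 < C ∧ 0 < δ ∧ ∀ τ : ℝ, 0 < τ → τ < δ →
        |θb τ - B * τ ^ (2 * m')| ≤ C * τ ^ (2 * m' + 1))) := by
  have hnea : ¬ ∀ᶠ τ in 𝓝 (0:ℝ), θa τ = 0 := by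
    intro h
    obtain ⟨τ, h1, h2⟩ := ((h.filter_mono nhdsWithin_le_nhds).and hab).exists
    rw [h1] at h2; exact lt_irrefl 0 h2.1
  have hneb : ¬ ∀ᶠ τ in 𝓝 (0:ℝ), θb τ = 0 := by
    intro h
    obtain ⟨τ, h1, h2⟩ := ((h.filter_mono nhdsWithin_le_nhds).and hab).exists
    rw [h1] at h2; exact lt_irrefl 0 h2.2
  obtain ⟨p, hp1, ga, hga, hga0, hfa, Ca, δa, hCa, hδa, hba⟩ := expand θa ha h0a hnea
  obtain ⟨q, hq1, gb, hgb, hgb0, hfb, Cb, δb, hCb, hδb, hbb⟩ := expand θb hb h0b hneb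
  have htga : Tendsto ga (𝓝[>] (0:ℝ)) (𝓝 (ga 0)) :=
    (hga.continuousAt.tendsto).mono_left nhdsWithin_le_nhds
  have htgb : Tendsto gb (𝓝[>] (0:ℝ)) (𝓝 (gb 0)) :=
    (hgb.continuousAt.tendsto).mono_left nhdsWithin_le_nhds
  have hgan : ∀ᶠ τ in 𝓝[>] (0:ℝ), ga τ < 0 := by
    filter_upwards [hfa.filter_mono nhdsWithin_le_nhds, hab, self_mem_nhdsWithin]
      with τ h1 h2 h3
    by_contra h
    push_neg at h
    have : (0:ℝ) ≤ τ ^ p * ga τ := mul_nonneg (pow_pos (mem_Ioi.mp h3) p).le h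
    rw [← h1] at this; linarith [h2.1]
  have hgbp : ∀ᶠ τ in 𝓝[>] (0:ℝ), 0 < gb τ := by
    filter_upwards [hfb.filter_mono nhdsWithin_le_nhds, hab, self_mem_nhdsWithin]
      with τ h1 h2 h3
    by_contra h
    push_neg at h
    have : τ ^ q * gb τ ≤ 0 := mul_nonpos_of_nonneg_of_nonpos (pow_pos (mem_Ioi.mp h3) q).le h
    rw [← h1] at this; linarith [h2.2]
  have haneg : ga 0 < 0 :=
    lt_of_le_of_ne (le_of_tendsto htga (hgan.mono fun τ h => le_of_lt h)) hga0
  have hbpos : 0 < gb 0 :=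
    lt_of_le_of_ne (ge_of_tendsto htgb (hgbp.mono fun τ h => le_of_lt h)) (Ne.symm hgb0)
  have hneg : Tendsto (fun τ : ℝ => -τ) (𝓝 0) (𝓝 (0:ℝ)) := by
    simpa using continuous_neg.tendsto (0:ℝ)
  have hfa' : ∀ᶠ τ in 𝓝 (0:ℝ), θa (-τ) = (-τ) ^ p * ga (-τ) := hneg.eventually hfa
  have hd : AnalyticAt ℝ (fun τ : ℝ => θa (-τ) - θb τ) 0 := by
    have ha' : AnalyticAt ℝ θa (-0 : ℝ) := by rwa [neg_zero]
    exact (ha'.comp (analyticAt_id.neg)).sub hb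
  rcases hd.eventually_eq_zero_or_eventually_ne_zero with hz | hnz
  · -- Case (i): θb τ = θa (-τ)
    left
    have hzb : ∀ᶠ τ in 𝓝 (0:ℝ), θb τ = θa (-τ) := by
      filter_upwards [hz] with τ h; linarith
    have hgan' : ∀ᶠ τ in 𝓝 (0:ℝ), ga (-τ) < 0 := by
      have ht : Tendsto (fun τ : ℝ => ga (-τ)) (𝓝 0) (𝓝 (ga 0)) :=
        hga.continuousAt.tendsto.comp hneg
      exact ht.eventually_lt_const haneg
    have hpodd : Odd p := by
      rcases Nat.even_or_odd p with he | ho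
      · exfalso
        obtain ⟨τ, ⟨⟨⟨hz1, hf1⟩, hg1⟩, hab1⟩, hτ⟩ :=
          (((((hzb.and hfa').and hgan').filter_mono nhdsWithin_le_nhds).and hab).and
            self_mem_nhdsWithin).exists
        have hτ0 : (0:ℝ) < τ := mem_Ioi.mp hτ
        have : θb τ = τ ^ p * ga (-τ) := by rw [hz1, hf1, he.neg_pow]
        nlinarith [pow_pos hτ0 p, hab1.2, mul_neg_of_pos_of_neg (pow_pos hτ0 p) hg1]
      · exact ho
    obtain ⟨k, hk⟩ := hpodd
    have e1 : 2 * (k + 1) - 1 = p := by omega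
    have e2 : 2 * (k + 1) = p + 1 := by omega
    refine ⟨k + 1, by omega, -(ga 0), by linarith, ?_, ?_⟩
    · -- bound for θa
      obtain ⟨C, δ, hC, hδ, hbd⟩ := bound_lemma θa ga p hfa Ca δa hCa hδa hba
      refine ⟨C, δ, hC, hδ, fun τ h1 h2 => ?_⟩
      rw [e1, e2, neg_mul, neg_neg]
      exact hbd τ h1 h2
    · -- bound for θb : θb τ = τ^p * (-ga (-τ))
      set gB : ℝ → ℝ := fun σ => -ga (-σ) with hgB
      have hfB : ∀ᶠ τ in 𝓝 (0:ℝ), θb τ = τ ^ p * gB τ := by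
        filter_upwards [hzb, hfa'] with τ h1 h2
        rw [h1, h2, (Odd.neg_pow ⟨k, hk⟩ τ)]
        simp only [hgB]; ring
      have hgB0 : gB 0 = -(ga 0) := by simp [hgB]
      have hbB : ∀ σ : ℝ, |σ| < δa → |gB σ - gB 0| ≤ Ca * |σ| := by
        intro σ hσ
        have h1 := hba (-σ) (by rwa [abs_neg])
        rw [abs_neg] at h1
        calc |gB σ - gB 0| = |ga (-σ) - ga 0| := by
              simp only [hgB, neg_zero]; rw [show -ga (-σ) - -ga 0 = -(ga (-σ) - ga 0) by ring,
                abs_neg]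
          _ ≤ Ca * |σ| := h1
      obtain ⟨C, δ, hC, hδ, hbd⟩ := bound_lemma θb gB p hfB Ca δa hCa hδa hbB
      refine ⟨C, δ, hC, hδ, fun τ h1 h2 => ?_⟩
      rw [e1, e2, ← hgB0]
      exact hbd τ h1 h2
  · -- Case (ii): both even
    right
    have heven : ∀ᶠ τ in 𝓝[≠] (0:ℝ), θa (-τ) = θa τ ∧ θb (-τ) = θb τ := by
      filter_upwards [hsym.filter_mono nhdsWithin_le_nhds, hnz] with τ h h2
      rcases h with h | h
      · exact h
      · exact absurd (by linarith [h.1] : θa (-τ) - θb τ = 0) h2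
    have hpe : Even p := even_order θa ga p hga hga0 hfa (heven.mono fun τ h => h.1)
    have hqe : Even q := even_order θb gb q hgb hgb0 hfb (heven.mono fun τ h => h.2)
    obtain ⟨n, hn⟩ := hpe
    obtain ⟨m', hm'⟩ := hqe
    have e1 : 2 * n = p := by omega
    have e2 : 2 * m' = q := by omega
    refine ⟨n, m', by omega, by omega, ga 0, gb 0, haneg, hbpos, ?_, ?_⟩
    · obtain ⟨C, δ, hC, hδ, hbd⟩ := bound_lemma θa ga p hfa Ca δa hCa hδa hba
      exact ⟨C, δ, hC, hδ, fun τ h1 h2 => by rw [e1]; exact hbd τ h1 h2⟩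
    · obtain ⟨C, δ, hC, hδ, hbd⟩ := bound_lemma θb gb q hfb Cb δb hCb hδb hbb
      exact ⟨C, δ, hC, hδ, fun τ h1 h2 => by rw [e2]; exact hbd τ h1 h2⟩

lemma bound_transfer (f g X : ℝ → ℝ) (v : ℕ)
    (heq : ∀ᶠ τ in 𝓝[>] (0:ℝ), f τ = g τ)
    (h : ∃ C δ : ℝ, 0 < C ∧ 0 < δ ∧ ∀ τ : ℝ, 0 < τ → τ < δ → |g τ - X τ| ≤ C * τ ^ v) :
    ∃ C δ : ℝ, 0 < C ∧ 0 < δ ∧ ∀ τ : ℝ, 0 < τ → τ < δ → |f τ - X τ| ≤ C * τ ^ v := by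
  obtain ⟨δe, hδe, he⟩ := extract_delta heq
  obtain ⟨C, δ, hC, hδ, hb⟩ := h
  refine ⟨C, min δ δe, hC, lt_min hδ hδe, fun τ h1 h2 => ?_⟩
  rw [he τ h1 (h2.trans_le (min_le_right _ _))]
  exact hb τ h1 (h2.trans_le (min_le_left _ _))


/-- Asymptotics of the two eigenvalue branches at a double eigenvalue:
with `m = min(θ₁,θ₂)`, `M = max(θ₁,θ₂)` and `m < 0 < M` on `(0,ε)`, either
(i) `m(τ) = −κτ^{2n−1} + O(τ^{2n})` and `M(τ) = κτ^{2n−1} + O(τ^{2n})` for some `n ≥ 1`,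
`κ > 0`, or (ii) `m(τ) = Aτ^{2n} + O(τ^{2n+1})` and `M(τ) = Bτ^{2m'} + O(τ^{2m'+1})` for
some `n, m' ≥ 1` and `A < 0 < B`. Here `f(τ) = g(τ) + O(τ^k)` as `τ → 0⁺` means
`∃ C, δ > 0, |f(τ) − g(τ)| ≤ Cτ^k` for `τ ∈ (0,δ)`. -/
theorem stmt_15 (ε : ℝ) (hε : 0 < ε) (θ₁ θ₂ : ℝ → ℝ)
    (h₁ : AnalyticOnNhd ℝ θ₁ (Set.Ioo (-ε) ε))
    (h₂ : AnalyticOnNhd ℝ θ₂ (Set.Ioo (-ε) ε))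
    (hnz₁ : ¬ ∀ τ ∈ Set.Ioo (-ε) ε, θ₁ τ = 0)
    (hnz₂ : ¬ ∀ τ ∈ Set.Ioo (-ε) ε, θ₂ τ = 0)
    (h0₁ : θ₁ 0 = 0) (h0₂ : θ₂ 0 = 0)
    (hsym : ∀ τ ∈ Set.Ioo (-ε) ε,
      (θ₁ (-τ) = θ₁ τ ∧ θ₂ (-τ) = θ₂ τ) ∨ (θ₁ (-τ) = θ₂ τ ∧ θ₂ (-τ) = θ₁ τ))
    (m M : ℝ → ℝ)
    (hm : ∀ τ, m τ = min (θ₁ τ) (θ₂ τ))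
    (hM : ∀ τ, M τ = max (θ₁ τ) (θ₂ τ))
    (hsign : ∀ τ ∈ Set.Ioo 0 ε, m τ < 0 ∧ 0 < M τ) :
    (∃ n : ℕ, 1 ≤ n ∧ ∃ κ : ℝ, 0 < κ ∧
      (∃ C δ : ℝ, 0 < C ∧ 0 < δ ∧ ∀ τ : ℝ, 0 < τ → τ < δ →
        |m τ - (-(κ * τ ^ (2 * n - 1)))| ≤ C * τ ^ (2 * n)) ∧
      (∃ C δ : ℝ, 0 < C ∧ 0 < δ ∧ ∀ τ : ℝ, 0 < τ → τ < δ →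
        |M τ - κ * τ ^ (2 * n - 1)| ≤ C * τ ^ (2 * n))) ∨
    (∃ n m' : ℕ, 1 ≤ n ∧ 1 ≤ m' ∧ ∃ A B : ℝ, A < 0 ∧ 0 < B ∧
      (∃ C δ : ℝ, 0 < C ∧ 0 < δ ∧ ∀ τ : ℝ, 0 < τ → τ < δ →
        |m τ - A * τ ^ (2 * n)| ≤ C * τ ^ (2 * n + 1)) ∧
      (∃ C δ : ℝ, 0 < C ∧ 0 < δ ∧ ∀ τ : ℝ, 0 < τ → τ < δ →
        |M τ - B * τ ^ (2 * m')| ≤ C * τ ^ (2 * m' + 1))) := by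
  have h0mem : (0:ℝ) ∈ Ioo (-ε) ε := ⟨by linarith, hε⟩
  have hmem : Ioo (-ε) ε ∈ 𝓝 (0:ℝ) := isOpen_Ioo.mem_nhds h0mem
  have h1a : AnalyticAt ℝ θ₁ 0 := h₁ 0 h0mem
  have h2a : AnalyticAt ℝ θ₂ 0 := h₂ 0 h0mem
  have hne1 : ¬ ∀ᶠ τ in 𝓝 (0:ℝ), θ₁ τ = 0 := fun h =>
    hnz₁ (fun τ hτ => h₁.eqOn_zero_of_preconnected_of_eventuallyEq_zero
      isPreconnected_Ioo h0mem (h.mono fun τ hτ => hτ) hτ)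
  have hne2 : ¬ ∀ᶠ τ in 𝓝 (0:ℝ), θ₂ τ = 0 := fun h =>
    hnz₂ (fun τ hτ => h₂.eqOn_zero_of_preconnected_of_eventuallyEq_zero
      isPreconnected_Ioo h0mem (h.mono fun τ hτ => hτ) hτ)
  have hsymev : ∀ᶠ τ in 𝓝 (0:ℝ),
      (θ₁ (-τ) = θ₁ τ ∧ θ₂ (-τ) = θ₂ τ) ∨ (θ₁ (-τ) = θ₂ τ ∧ θ₂ (-τ) = θ₁ τ) :=
    eventually_of_mem hmem (fun τ hτ => hsym τ hτ)
  have hsignev : ∀ᶠ τ in 𝓝[>] (0:ℝ), m τ < 0 ∧ 0 < M τ :=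
    eventually_of_mem (Ioo_mem_nhdsGT_of_mem ⟨le_refl 0, hε⟩) (fun τ hτ => hsign τ hτ)
  -- determine the sign of θ₁ near 0⁺
  obtain ⟨p, hp1, g₁, hg₁, hg₁0, hf₁, _⟩ := expand θ₁ h1a h0₁ hne1
  have htg₁ : Tendsto g₁ (𝓝[>] (0:ℝ)) (𝓝 (g₁ 0)) :=
    hg₁.continuousAt.tendsto.mono_left nhdsWithin_le_nhds
  have hsgn : (∀ᶠ τ in 𝓝[>] (0:ℝ), θ₁ τ < 0) ∨ (∀ᶠ τ in 𝓝[>] (0:ℝ), 0 < θ₁ τ) := by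
    rcases lt_or_gt_of_ne hg₁0 with hneg | hpos
    · left
      filter_upwards [hf₁.filter_mono nhdsWithin_le_nhds, htg₁.eventually_lt_const hneg,
        self_mem_nhdsWithin] with τ hh1 hh2 hh3
      rw [hh1]
      exact mul_neg_of_pos_of_neg (pow_pos (mem_Ioi.mp hh3) p) hh2
    · right
      filter_upwards [hf₁.filter_mono nhdsWithin_le_nhds, htg₁.eventually_const_lt hpos,
        self_mem_nhdsWithin] with τ hh1 hh2 hh3
      rw [hh1]
      exact mul_pos (pow_pos (mem_Ioi.mp hh3) p) hh2
  rcases hsgn with hθ₁neg | hθ₁pos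
  · -- θ₁ < 0 < θ₂ near 0⁺
    have habpair : ∀ᶠ τ in 𝓝[>] (0:ℝ), θ₁ τ < 0 ∧ 0 < θ₂ τ := by
      filter_upwards [hθ₁neg, hsignev] with τ hh1 hh2
      refine ⟨hh1, ?_⟩
      have := hh2.2; rw [hM] at this
      rcases lt_max_iff.mp this with h | h
      · linarith
      · exact h
    have hmeq : ∀ᶠ τ in 𝓝[>] (0:ℝ), m τ = θ₁ τ := by
      filter_upwards [habpair] with τ hh
      rw [hm]; exact min_eq_left (by linarith [hh.1, hh.2])
    have hMeq : ∀ᶠ τ in 𝓝[>] (0:ℝ), M τ = θ₂ τ := by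
      filter_upwards [habpair] with τ hh
      rw [hM]; exact max_eq_right (by linarith [hh.1, hh.2])
    rcases key θ₁ θ₂ h1a h2a h0₁ h0₂ hsymev habpair with
      ⟨n, hn, κ, hκ, hbm, hbM⟩ | ⟨n, m', hn, hm', A, B, hA, hB, hbm, hbM⟩
    · exact Or.inl ⟨n, hn, κ, hκ, bound_transfer m θ₁ _ _ hmeq hbm,
        bound_transfer M θ₂ _ _ hMeq hbM⟩
    · exact Or.inr ⟨n, m', hn, hm', A, B, hA, hB, bound_transfer m θ₁ _ _ hmeq hbm,
        bound_transfer M θ₂ _ _ hMeq hbM⟩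
  · -- θ₂ < 0 < θ₁ near 0⁺
    have habpair : ∀ᶠ τ in 𝓝[>] (0:ℝ), θ₂ τ < 0 ∧ 0 < θ₁ τ := by
      filter_upwards [hθ₁pos, hsignev] with τ hh1 hh2
      refine ⟨?_, hh1⟩
      have := hh2.1; rw [hm] at this
      rcases min_lt_iff.mp this with h | h
      · linarith
      · exact h
    have hsymev' : ∀ᶠ τ in 𝓝 (0:ℝ),
        (θ₂ (-τ) = θ₂ τ ∧ θ₁ (-τ) = θ₁ τ) ∨ (θ₂ (-τ) = θ₁ τ ∧ θ₁ (-τ) = θ₂ τ) := by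
      filter_upwards [hsymev] with τ h; tauto
    have hmeq : ∀ᶠ τ in 𝓝[>] (0:ℝ), m τ = θ₂ τ := by
      filter_upwards [habpair] with τ hh
      rw [hm]; exact min_eq_right (by linarith [hh.1, hh.2])
    have hMeq : ∀ᶠ τ in 𝓝[>] (0:ℝ), M τ = θ₁ τ := by
      filter_upwards [habpair] with τ hh
      rw [hM]; exact max_eq_left (by linarith [hh.1, hh.2])
    rcases key θ₂ θ₁ h2a h1a h0₂ h0₁ hsymev' habpair with
      ⟨n, hn, κ, hκ, hbm, hbM⟩ | ⟨n, m', hn, hm', A, B, hA, hB, hbm, hbM⟩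
    · exact Or.inl ⟨n, hn, κ, hκ, bound_transfer m θ₂ _ _ hmeq hbm,
        bound_transfer M θ₁ _ _ hMeq hbM⟩
    · exact Or.inr ⟨n, m', hn, hm', A, B, hA, hB, bound_transfer m θ₂ _ _ hmeq hbm,
        bound_transfer M θ₁ _ _ hMeq hbM⟩
end

section
/- Let U ⊆ ℝ² be open and let A, B : U → ℝ be real-analytic functions such that B(x)² − 4A(x) ≥ 0 for all x ∈ U. Define μ₁(x) ≤ μ₂(x) to be the two real roots of the quadratic equation μ² − B(x)μ + A(x) = 0, i.e., μ_{1,2}(x) = (B(x) ∓ √(B(x)² − 4A(x)))/2. Then μ₁ and μ₂ are locally Lipschitz continuous on U. -/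
open Set Metric

private lemma poly_key (a d r sb sM sS s2 : ℝ) (hsb0 : 0 ≤ sb) (hd : 0 < d)
    (hr : 0 < r) (hsM1 : 1 ≤ sM) (hsS0 : 0 ≤ sS) (hsbS : sb ≤ sS) (hs20 : 0 ≤ s2)
    (hs2sq : s2 ^ 2 = 2 * sM ^ 2)
    (h : a ≤ sb ^ 2 + sb ^ 2 * d / min (r / 2) (sb / sM + d)
        + sM ^ 2 * min (r / 2) (sb / sM + d) * d + sM ^ 2 * d ^ 2) :
    a ≤ (sb + (sS / r + s2) * d) ^ 2 := by
  have hsM0 : (0:ℝ) < sM := by linarith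
  have hs2M : sM ≤ s2 := by nlinarith [sq_nonneg (s2 - sM), sq_nonneg (s2 + sM)]
  obtain ⟨L, hL⟩ : ∃ L : ℝ, L = sS / r + s2 := ⟨_, rfl⟩
  rw [← hL]
  have hLnn : 0 ≤ sS / r := by positivity
  have hL0 : 0 ≤ L := by rw [hL]; linarith
  have hLs2 : s2 ≤ L := by rw [hL]; linarith
  rcases min_cases (r / 2) (sb / sM + d) with ⟨hmin, hle⟩ | ⟨hmin, hlt⟩
  · -- t = r/2, and r/2 ≤ sb/sM + d
    rw [hmin] at h
    have hrsM : r * sM ≤ 2 * sb + 2 * sM * d := by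
      have h' := mul_le_mul_of_nonneg_right hle hsM0.le
      have e : (sb / sM + d) * sM = sb + sM * d := by
        field_simp
      rw [e] at h'
      nlinarith [h']
    have h3 := mul_le_mul_of_nonneg_left h (by positivity : (0:ℝ) ≤ r ^ 2)
    have e4 : r ^ 2 * (sb ^ 2 + sb ^ 2 * d / (r / 2) + sM ^ 2 * (r / 2) * d + sM ^ 2 * d ^ 2)
        = r ^ 2 * sb ^ 2 + 2 * r * sb ^ 2 * d + sM ^ 2 * r ^ 3 * d / 2
          + sM ^ 2 * r ^ 2 * d ^ 2 := by
      field_simp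
    rw [e4] at h3
    have c1 : 2 * r * sb ^ 2 * d ≤ 2 * r * sb * sS * d := by
      linarith [mul_le_mul_of_nonneg_right hsbS (by positivity : (0:ℝ) ≤ 2 * r * sb * d)]
    have c2 : sM ^ 2 * r ^ 3 * d / 2 ≤ r ^ 2 * sM * sb * d + sM ^ 2 * r ^ 2 * d ^ 2 := by
      linarith [mul_le_mul_of_nonneg_right hrsM (by positivity : (0:ℝ) ≤ sM * r ^ 2 * d / 2)]
    have c3 : r ^ 2 * sM * sb * d ≤ 2 * r ^ 2 * sb * s2 * d := by
      linarith [mul_le_mul_of_nonneg_right hs2M (by positivity : (0:ℝ) ≤ r ^ 2 * sb * d),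
        mul_nonneg (mul_nonneg (mul_nonneg (sq_nonneg r) hsb0) hs20) hd.le]
    have c4 : sM ^ 2 * r ^ 2 * d ^ 2 + sM ^ 2 * r ^ 2 * d ^ 2 = r ^ 2 * s2 ^ 2 * d ^ 2 := by
      linear_combination (- r ^ 2 * d ^ 2) * hs2sq
    have expand : (r * sb + (sS + r * s2) * d) ^ 2
        = r ^ 2 * sb ^ 2 + 2 * r * sb * sS * d + 2 * r ^ 2 * sb * s2 * d
          + sS ^ 2 * d ^ 2 + 2 * r * sS * s2 * d ^ 2 + r ^ 2 * s2 ^ 2 * d ^ 2 := by ring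
    have hnn : (0:ℝ) ≤ sS ^ 2 * d ^ 2 + 2 * r * sS * s2 * d ^ 2 := by positivity
    have hP : r ^ 2 * a ≤ (r * sb + (sS + r * s2) * d) ^ 2 := by
      rw [expand]; linarith
    have hfac : r * sb + (sS + r * s2) * d = r * (sb + L * d) := by
      rw [hL]; field_simp
    rw [hfac] at hP
    exact (mul_le_mul_iff_right₀ (by positivity : (0:ℝ) < r ^ 2)).1 (by
      calc r ^ 2 * a ≤ (r * (sb + L * d)) ^ 2 := hP
      _ = r ^ 2 * (sb + L * d) ^ 2 := by ring)
  · -- t = sb/sM + d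
    rw [hmin] at h
    have hτ0 : (0:ℝ) < sb + sM * d := by nlinarith
    have e1 : sb / sM + d = (sb + sM * d) / sM := by field_simp
    rw [e1] at h
    have h3 := mul_le_mul_of_nonneg_left h hτ0.le
    have e2 : (sb + sM * d) * (sb ^ 2 + sb ^ 2 * d / ((sb + sM * d) / sM)
          + sM ^ 2 * ((sb + sM * d) / sM) * d + sM ^ 2 * d ^ 2)
        = (sb + sM * d) * sb ^ 2 + 2 * sM * sb ^ 2 * d + 2 * sb * sM ^ 2 * d ^ 2
          + sM ^ 3 * d ^ 3 + sM ^ 2 * sb * d ^ 2 + sM ^ 3 * d ^ 3 := by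
      field_simp
      ring
    rw [e2] at h3
    have d1 : 2 * sM * sb ^ 2 * d ≤ 2 * s2 * sb ^ 2 * d := by
      linarith [mul_le_mul_of_nonneg_right hs2M (by positivity : (0:ℝ) ≤ 2 * sb ^ 2 * d)]
    have d2 : 2 * sb * sM ^ 2 * d ^ 2 ≤ 2 * s2 * sb * sM * d ^ 2 := by
      linarith [mul_le_mul_of_nonneg_right hs2M (by positivity : (0:ℝ) ≤ 2 * sb * sM * d ^ 2)]
    have d3 : (0:ℝ) ≤ sM ^ 2 * sb * d ^ 2 := by positivity
    have hA : a ≤ (sb + s2 * d) ^ 2 := by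
      have expand2 : (sb + sM * d) * (sb + s2 * d) ^ 2
          = (sb + sM * d) * sb ^ 2 + 2 * s2 * sb ^ 2 * d + 2 * s2 * sb * sM * d ^ 2
            + s2 ^ 2 * sb * d ^ 2 + s2 ^ 2 * sM * d ^ 3 := by ring
      have e7 : sM ^ 3 * d ^ 3 + sM ^ 3 * d ^ 3 = s2 ^ 2 * sM * d ^ 3 := by
        linear_combination (- sM * d ^ 3) * hs2sq
      have e8 : 2 * sM ^ 2 * sb * d ^ 2 = s2 ^ 2 * sb * d ^ 2 := by
        linear_combination (- sb * d ^ 2) * hs2sq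
      have hP : (sb + sM * d) * a ≤ (sb + sM * d) * (sb + s2 * d) ^ 2 := by
        rw [expand2]; linarith
      exact (mul_le_mul_iff_right₀ hτ0).1 hP
    have hmono : sb + s2 * d ≤ sb + L * d := by
      have := mul_le_mul_of_nonneg_right hLs2 hd.le
      linarith
    calc a ≤ (sb + s2 * d) ^ 2 := hA
      _ ≤ (sb + L * d) ^ 2 := pow_le_pow_left₀ (by positivity) hmono 2

private lemma sqrt_key (a b d r S M : ℝ) (ha : 0 ≤ a) (hb : 0 ≤ b) (hd : 0 < d)
    (hr : 0 < r) (hM : 1 ≤ M) (hbS : b ≤ S)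
    (h : a ≤ b + b * d / min (r / 2) (Real.sqrt b / Real.sqrt M + d)
        + M * min (r / 2) (Real.sqrt b / Real.sqrt M + d) * d + M * d ^ 2) :
    Real.sqrt a ≤ Real.sqrt b + (Real.sqrt S / r + Real.sqrt (2 * M)) * d := by
  have hM0 : (0:ℝ) < M := lt_of_lt_of_le one_pos hM
  have hsbsq : Real.sqrt b ^ 2 = b := Real.sq_sqrt hb
  have hsMsq : Real.sqrt M ^ 2 = M := Real.sq_sqrt hM0.le
  have hsM1 : 1 ≤ Real.sqrt M := by
    nlinarith [Real.sqrt_nonneg M, sq_nonneg (Real.sqrt M - 1), sq_nonneg (Real.sqrt M + 1)]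
  have key : a ≤ (Real.sqrt b + (Real.sqrt S / r + Real.sqrt (2 * M)) * d) ^ 2 := by
    refine poly_key a d r (Real.sqrt b) (Real.sqrt M) (Real.sqrt S) (Real.sqrt (2 * M))
      (Real.sqrt_nonneg b) hd hr hsM1 (Real.sqrt_nonneg S) (Real.sqrt_le_sqrt hbS)
      (Real.sqrt_nonneg _) ?_ ?_
    · rw [Real.sq_sqrt (by linarith), hsMsq]
    · rw [hsbsq, hsMsq]; exact h
  calc Real.sqrt a
      ≤ Real.sqrt ((Real.sqrt b + (Real.sqrt S / r + Real.sqrt (2 * M)) * d) ^ 2) :=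
        Real.sqrt_le_sqrt key
    _ = _ := Real.sqrt_sq (by positivity)



private lemma sqrt_lip {E : Type*} [NormedAddCommGroup E] [NormedSpace ℝ E] [ProperSpace E]
    {U : Set E} (hU : IsOpen U) {D : E → ℝ} (hD : AnalyticOnNhd ℝ D U)
    (hD0 : ∀ x ∈ U, 0 ≤ D x) {x₀ : E} (hx₀ : x₀ ∈ U) :
    ∃ ρ > 0, ball x₀ ρ ⊆ U ∧ ∃ L : ℝ, 0 ≤ L ∧
      ∀ x ∈ ball x₀ ρ, ∀ y ∈ ball x₀ ρ,
        |Real.sqrt (D x) - Real.sqrt (D y)| ≤ L * ‖x - y‖ := by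
  obtain ⟨r, hr0, hrU⟩ : ∃ r > 0, closedBall x₀ r ⊆ U :=
    (Metric.nhds_basis_closedBall.mem_iff).1 (hU.mem_nhds hx₀)
  set F1 := fderiv ℝ D with hF1def
  have hF1an : AnalyticOnNhd ℝ F1 U := hD.fderiv
  have hF2an : AnalyticOnNhd ℝ (fderiv ℝ F1) U := hF1an.fderiv
  obtain ⟨M₂, hM₂⟩ : ∃ C, ∀ z ∈ closedBall x₀ r, ‖fderiv ℝ F1 z‖ ≤ C :=
    (isCompact_closedBall x₀ r).exists_bound_of_continuousOn (f := fderiv ℝ F1) (hF2an.continuousOn.mono hrU)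
  obtain ⟨S₀, hS₀⟩ : ∃ C, ∀ z ∈ closedBall x₀ r, ‖D z‖ ≤ C :=
    (isCompact_closedBall x₀ r).exists_bound_of_continuousOn (hD.continuousOn.mono hrU)
  obtain ⟨M, hM1, hF1bd⟩ : ∃ M : ℝ, 1 ≤ M ∧ ∀ z ∈ closedBall x₀ r, ‖fderiv ℝ F1 z‖ ≤ M :=
    ⟨max M₂ 1, le_max_right _ _, fun z hz => le_trans (hM₂ z hz) (le_max_left _ _)⟩
  have hM0 : (0:ℝ) < M := lt_of_lt_of_le one_pos hM1
  obtain ⟨S, hS0, hDS⟩ : ∃ S : ℝ, 0 ≤ S ∧ ∀ z ∈ closedBall x₀ r, D z ≤ S :=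
    ⟨max S₀ 0, le_max_right _ _, fun z hz =>
      le_trans (le_trans (le_abs_self _) (hS₀ z hz)) (le_max_left _ _)⟩
  have hF1diff : ∀ p ∈ closedBall x₀ r, DifferentiableAt ℝ F1 p := fun p hp =>
    (hF1an p (hrU hp)).differentiableAt
  have hF1lip : ∀ z ∈ closedBall x₀ r, ∀ w ∈ closedBall x₀ r,
      ‖F1 z - F1 w‖ ≤ M * ‖z - w‖ := fun z hz w hw =>
    (convex_closedBall x₀ r).norm_image_sub_le_of_norm_fderiv_le hF1diff hF1bd hw hz
  -- Taylor estimate with base point y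
  have htay : ∀ y ∈ closedBall x₀ r, ∀ p ∈ closedBall x₀ r,
      |D p - D y - F1 y (p - y)| ≤ M * ‖p - y‖ * ‖p - y‖ := by
    intro y hy p hp
    have hsub : closedBall y ‖p - y‖ ∩ closedBall x₀ r ⊆ closedBall x₀ r := inter_subset_right
    have hconv : Convex ℝ (closedBall y ‖p - y‖ ∩ closedBall x₀ r) :=
      (convex_closedBall _ _).inter (convex_closedBall _ _)
    have hys : y ∈ closedBall y ‖p - y‖ ∩ closedBall x₀ r :=
      ⟨mem_closedBall_self (norm_nonneg _), hy⟩
    have hps : p ∈ closedBall y ‖p - y‖ ∩ closedBall x₀ r :=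
      ⟨by simp [mem_closedBall, dist_eq_norm], hp⟩
    have := hconv.norm_image_sub_le_of_norm_fderiv_le' (f := D) (φ := F1 y)
      (C := M * ‖p - y‖)
      (fun z hz => (hD z (hrU (hsub hz))).differentiableAt)
      (fun z hz => by
        have h1 : ‖F1 z - F1 y‖ ≤ M * ‖z - y‖ := hF1lip z (hsub hz) y hy
        have h2 : ‖z - y‖ ≤ ‖p - y‖ := by
          have := hz.1; rw [mem_closedBall, dist_eq_norm] at this; exact this
        exact le_trans h1 (mul_le_mul_of_nonneg_left h2 hM0.le))
      hys hps
    simpa [Real.norm_eq_abs] using this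
  -- main one-sided estimate on the half ball
  obtain ⟨L, hLdef⟩ : ∃ L : ℝ, L = Real.sqrt S / r + Real.sqrt (2 * M) := ⟨_, rfl⟩
  have hL0 : 0 ≤ L := by rw [hLdef]; positivity
  have hhalf : ∀ x ∈ ball x₀ (r / 2), x ∈ closedBall x₀ r := fun x hx => by
    rw [mem_ball] at hx; rw [mem_closedBall]; linarith
  have key : ∀ x ∈ ball x₀ (r / 2), ∀ y ∈ ball x₀ (r / 2),
      Real.sqrt (D x) ≤ Real.sqrt (D y) + L * ‖x - y‖ := by
    intro x hx y hy
    rcases eq_or_ne x y with rfl | hxy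
    · simp [hL0, mul_nonneg hL0 (norm_nonneg _)]
    · have hd : (0:ℝ) < ‖x - y‖ := by
        rw [norm_pos_iff]; exact sub_ne_zero.2 hxy
      obtain ⟨d, hddef⟩ : ∃ d : ℝ, d = ‖x - y‖ := ⟨_, rfl⟩
      rw [← hddef] at hd ⊢
      obtain ⟨t, htdef⟩ : ∃ t : ℝ,
          t = min (r / 2) (Real.sqrt (D y) / Real.sqrt M + d) := ⟨_, rfl⟩
      have hsM0 : (0:ℝ) < Real.sqrt M := Real.sqrt_pos.2 hM0
      have ht0 : 0 < t := by
        rw [htdef]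
        exact lt_min (by linarith) (by positivity)
      have htr : t ≤ r / 2 := htdef ▸ min_le_left _ _
      set p := y + (t / d) • (y - x) with hpdef
      have hpy : ‖p - y‖ = t := by
        have : p - y = (t / d) • (y - x) := by rw [hpdef]; abel
        rw [this, norm_smul, Real.norm_eq_abs, abs_of_pos (by positivity),
          norm_sub_rev, ← hddef]
        field_simp
      have hp : p ∈ closedBall x₀ r := by
        rw [mem_closedBall]
        calc dist p x₀ ≤ dist p y + dist y x₀ := dist_triangle _ _ _
          _ ≤ t + r / 2 := by
              rw [mem_ball] at hy
              rw [dist_eq_norm, hpy]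
              linarith
          _ ≤ r := by linarith
      have hx' : x ∈ closedBall x₀ r := hhalf x hx
      have hy' : y ∈ closedBall x₀ r := hhalf y hy
      -- gradient bound
      have hF1p : F1 y (p - y) = -((t / d) * F1 y (x - y)) := by
        have e : p - y = (t / d) • (y - x) := by rw [hpdef]; abel
        rw [e, map_smul]
        have : y - x = -(x - y) := by abel
        rw [this, map_neg]
        simp [smul_eq_mul]
        ring
      obtain ⟨G, hGdef⟩ : ∃ G : ℝ, G = F1 y (x - y) := ⟨_, rfl⟩
      have htay1 := htay y hy' p hp
      rw [hF1p, ← hGdef, hpy] at htay1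
      have hDp : 0 ≤ D p := hD0 p (hrU hp)
      have hG1 : (t / d) * G ≤ D y + M * t ^ 2 := by
        have habs := abs_le.1 htay1
        nlinarith [habs.2, habs.1]
      have hG2 : G ≤ D y * d / t + M * t * d := by
        have h5 := mul_le_mul_of_nonneg_left hG1 hd.le
        have e5 : d * (t / d * G) = t * G := by field_simp
        rw [e5] at h5
        have h6 : t * G ≤ t * (D y * d / t + M * t * d) := by
          have e6 : t * (D y * d / t + M * t * d) = d * (D y + M * t ^ 2) := by
            field_simp
          rw [e6]; exact h5
        exact (mul_le_mul_iff_right₀ ht0).1 h6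
      -- Taylor at x
      have htay2 := htay y hy' x hx'
      rw [← hGdef, ← hddef] at htay2
      have habs2 := abs_le.1 htay2
      have hDx : D x ≤ D y + D y * d / t + M * t * d + M * d ^ 2 := by
        linarith [habs2.2, hG2]
      -- apply the sqrt lemma
      have := sqrt_key (D x) (D y) d r S M (hD0 x (hrU hx')) (hD0 y (hrU hy'))
        hd hr0 hM1 (hDS y hy') (by rw [← htdef]; exact hDx)
      rw [hLdef]
      exact this
  refine ⟨r / 2, by linarith, fun z hz => hrU (hhalf z hz), L, hL0, ?_⟩
  intro x hx y hy
  rw [abs_sub_le_iff]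
  constructor
  · have := key x hx y hy; linarith
  · have := key y hy x hx
    rw [norm_sub_rev] at this
    linarith



/-- If `A, B` are real-analytic on an open set `U ⊆ ℝ²` with
`B² − 4A ≥ 0` on `U`, then the two real roots
`μ_{1,2} = (B ∓ √(B² − 4A))/2` of `μ² − Bμ + A = 0` are locally Lipschitz on `U`. -/
theorem stmt_16 (U : Set (ℝ × ℝ)) (hU : IsOpen U)
    (A B : ℝ × ℝ → ℝ)
    (hA : AnalyticOnNhd ℝ A U) (hB : AnalyticOnNhd ℝ B U)
    (hdisc : ∀ x ∈ U, 0 ≤ B x ^ 2 - 4 * A x)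
    (μ₁ μ₂ : ℝ × ℝ → ℝ)
    (hμ₁ : ∀ x, μ₁ x = (B x - Real.sqrt (B x ^ 2 - 4 * A x)) / 2)
    (hμ₂ : ∀ x, μ₂ x = (B x + Real.sqrt (B x ^ 2 - 4 * A x)) / 2) :
    LocallyLipschitzOn U μ₁ ∧ LocallyLipschitzOn U μ₂ := by
  have hDan : AnalyticOnNhd ℝ (fun x => B x ^ 2 - 4 * A x) U :=
    (hB.pow 2).sub ((analyticOnNhd_const (v := (4:ℝ))).mul hA)
  suffices H : ∀ (ε : ℝ) (f : ℝ × ℝ → ℝ),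
      (∀ x, f x = (B x + ε * Real.sqrt (B x ^ 2 - 4 * A x)) / 2) →
      LocallyLipschitzOn U f by
    constructor
    · exact H (-1) μ₁ (fun x => by rw [hμ₁ x]; ring)
    · exact H 1 μ₂ (fun x => by rw [hμ₂ x]; ring)
  intro ε f hf
  intro x₀ hx₀
  obtain ⟨ρ, hρ0, hρU, L, hL0, hkey⟩ := sqrt_lip hU hDan hdisc hx₀
  obtain ⟨r₁, hr₁0, hr₁U⟩ : ∃ r > 0, closedBall x₀ r ⊆ U :=
    (Metric.nhds_basis_closedBall.mem_iff).1 (hU.mem_nhds hx₀)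
  obtain ⟨C₀, hC₀⟩ : ∃ C, ∀ z ∈ closedBall x₀ r₁, ‖fderiv ℝ B z‖ ≤ C :=
    (isCompact_closedBall x₀ r₁).exists_bound_of_continuousOn
      (hB.fderiv.continuousOn.mono hr₁U)
  obtain ⟨CB, hCB0, hCBbd⟩ : ∃ C : ℝ, 0 ≤ C ∧ ∀ z ∈ closedBall x₀ r₁, ‖fderiv ℝ B z‖ ≤ C :=
    ⟨max C₀ 0, le_max_right _ _, fun z hz => le_trans (hC₀ z hz) (le_max_left _ _)⟩
  have hBlip : ∀ x ∈ ball x₀ r₁, ∀ y ∈ ball x₀ r₁, |B x - B y| ≤ CB * ‖x - y‖ := by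
    intro x hx y hy
    have := (convex_ball x₀ r₁).norm_image_sub_le_of_norm_fderiv_le
      (fun z hz => (hB z (hr₁U (ball_subset_closedBall hz))).differentiableAt)
      (fun z hz => hCBbd z (ball_subset_closedBall hz)) hy hx
    simpa [Real.norm_eq_abs] using this
  obtain ⟨σ, hσ0, hσρ, hσr₁⟩ : ∃ σ : ℝ, 0 < σ ∧ σ ≤ ρ ∧ σ ≤ r₁ :=
    ⟨min ρ r₁, lt_min hρ0 hr₁0, min_le_left _ _, min_le_right _ _⟩
  refine ⟨((CB + |ε| * L) / 2).toNNReal, ball x₀ σ,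
    mem_nhdsWithin_of_mem_nhds (ball_mem_nhds _ hσ0), ?_⟩
  apply LipschitzOnWith.of_dist_le_mul
  intro x hx y hy
  have hxρ : x ∈ ball x₀ ρ := mem_of_mem_of_subset hx (ball_subset_ball hσρ)
  have hyρ : y ∈ ball x₀ ρ := mem_of_mem_of_subset hy (ball_subset_ball hσρ)
  have hxr : x ∈ ball x₀ r₁ := mem_of_mem_of_subset hx (ball_subset_ball hσr₁)
  have hyr : y ∈ ball x₀ r₁ := mem_of_mem_of_subset hy (ball_subset_ball hσr₁)
  have h1 := hBlip x hxr y hyr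
  have h2 := hkey x hxρ y hyρ
  have hK : (((CB + |ε| * L) / 2).toNNReal : ℝ) = (CB + |ε| * L) / 2 :=
    Real.coe_toNNReal _ (by positivity)
  rw [Real.dist_eq, hK, dist_eq_norm]
  rw [hf x, hf y]
  have e : (B x + ε * Real.sqrt (B x ^ 2 - 4 * A x)) / 2
      - (B y + ε * Real.sqrt (B y ^ 2 - 4 * A y)) / 2
      = ((B x - B y) + ε * (Real.sqrt (B x ^ 2 - 4 * A x)
          - Real.sqrt (B y ^ 2 - 4 * A y))) / 2 := by ring
  rw [e]
  have h3 : |ε * (Real.sqrt (B x ^ 2 - 4 * A x) - Real.sqrt (B y ^ 2 - 4 * A y))|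
      ≤ |ε| * (L * ‖x - y‖) := by
    rw [abs_mul]
    exact mul_le_mul_of_nonneg_left h2 (abs_nonneg _)
  have htot : |B x - B y + ε * (Real.sqrt (B x ^ 2 - 4 * A x)
      - Real.sqrt (B y ^ 2 - 4 * A y))| ≤ CB * ‖x - y‖ + |ε| * (L * ‖x - y‖) :=
    (abs_add_le _ _).trans (by linarith)
  rw [abs_div, abs_two]
  linarith [htot]
end
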